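/- arXiv:cs/0606033 — 5 statements merged into one kernel-verified Lean document; each statement's English description precedes it below -/
import Mathlib

section
/- There exists a universal tuatara machine: a tuatara machine W such that for every tuatara machine V there is a constant c ≥ 0 with the property that for every x ∈ dom(V) there is a string p with |p| ≤ |x| + c and W(p) = V(x). (Concretely, if (C_i)_{i≥1} enumerates all tuatara machines, the machine W defined by W(0^i 1 x) = C_i(x) is such a universal tuatara machine.) -/
open scoped ENNReal

/-- The domain of a Turing machine (a partial function on binary strings). -/
def dom (f : List Bool →. List Bool) : Set (List Bool) := {p | (f p).Dom}

/-- A machine is self-delimiting if its domain is prefix-free. -/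
def SelfDelim (f : List Bool →. List Bool) : Prop :=
  ∀ p ∈ dom f, ∀ q ∈ dom f, p <+: q → p = q

/-- Chaitin's Omega number of a machine, in `[0,∞]`. -/
noncomputable def Omega (f : List Bool →. List Bool) : ℝ≥0∞ :=
  ∑' p : dom f, (2 : ℝ≥0∞)⁻¹ ^ (p : List Bool).length

/-- `bin n` is the binary expansion of `n` with the leading 1 removed. -/
def bin (n : ℕ) : List Bool := (Nat.bits n).reverse.tail

/-- `Υ[A]`: the set of positive integers whose `bin`-code lies in `A`. -/
def Ups (A : Set (List Bool)) : Set ℕ := {n | 1 ≤ n ∧ bin n ∈ A}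

/-- The zeta number of a machine, in `[0,∞]`. -/
noncomputable def zeta (f : List Bool →. List Bool) : ℝ≥0∞ :=
  ∑' n : Ups (dom f), ((n : ℕ) : ℝ≥0∞)⁻¹

/-- `U` is a universal self-delimiting Turing machine. -/
def UnivSD (U : List Bool →. List Bool) : Prop :=
  SelfDelim U ∧ ∀ C : List Bool →. List Bool, Partrec C → SelfDelim C →
    ∃ c : ℕ, ∀ x ∈ dom C, ∃ p : List Bool, p.length ≤ x.length + c ∧ U p = C x

/-- `T` is a universal (plain) Turing machine. -/
def UnivTM (T : List Bool →. List Bool) : Prop :=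
  ∀ C : List Bool →. List Bool, Partrec C →
    ∃ c : ℕ, ∀ x ∈ dom C, ∃ p : List Bool, p.length ≤ x.length + c ∧ T p = C x

/-- Program-size / plain complexity of a string w.r.t. a machine. -/
noncomputable def Cpx (f : List Bool →. List Bool) (y : List Bool) : ℕ :=
  sInf {n : ℕ | ∃ w : List Bool, w.length = n ∧ y ∈ f w}

/-- Natural complexity of a string w.r.t. a machine, with `min ∅ = ∞`. -/
noncomputable def nabla (f : List Bool →. List Bool) (y : List Bool) : ℝ≥0∞ :=
  sInf {c : ℝ≥0∞ | ∃ n : ℕ, 1 ≤ n ∧ y ∈ f (bin n) ∧ c = (n : ℝ≥0∞)}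

/-- The real number with binary digit sequence `x`. -/
noncomputable def realDigits (x : ℕ → Bool) : ℝ :=
  ∑' i : ℕ, (if x i then (1 : ℝ) else 0) * (2 : ℝ)⁻¹ ^ (i + 1)

/-- The extended nonnegative real with binary digit sequence `x`. -/
noncomputable def ennDigits (x : ℕ → Bool) : ℝ≥0∞ :=
  ∑' i : ℕ, (if x i then (1 : ℝ≥0∞) else 0) * (2 : ℝ≥0∞)⁻¹ ^ (i + 1)

/-- The string of the first `m` digits of the sequence `x`. -/
def prefixStr (x : ℕ → Bool) (m : ℕ) : List Bool := (List.range m).map x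

/-- A real is computable if it is approximated to within `2⁻ⁿ` by a computable
sequence of rationals. -/
def ComputableReal (s : ℝ) : Prop :=
  ∃ f : ℕ → ℚ, Computable f ∧ ∀ n : ℕ, |s - (f n : ℝ)| ≤ (2 : ℝ)⁻¹ ^ n


open Nat.Partrec (Code)
open Nat.Partrec.Code Encodable Denumerable

def natOf (x : List Bool) : ℕ := x.foldl (fun n b => Nat.bit b n) 1

def parse : List Bool → ℕ × List Bool
  | [] => (0, [])
  | b :: t => if b then (0, t) else ((parse t).1 + 1, (parse t).2)

def hasTrue (p : List Bool) : Bool := p.foldr (fun b s => b || s) false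

/-- the stage-`k` approximation to the domain of code `e` (as codes of naturals). -/
def Sset (e k : ℕ) : List ℕ :=
  (List.range k).filterMap fun m =>
    if (evaln k (ofNat Code e) m).isSome then some m else none

/-- the weights-denominators of canonical strings in `Sset e k`. -/
def nsList (e k : ℕ) : List ℕ :=
  (Sset e k).filterMap fun m => (decode₂ (List Bool) m).map natOf

/-- Boolean check that the partial zeta-sum at stage `k` is at most 1. -/
def sumOK (e k : ℕ) : Bool :=
  ((nsList e k).map (fun n => (nsList e k).prod / n)).sum ≤ (nsList e k).prod

def elemB (a : ℕ) (l : List ℕ) : Bool := l.foldr (fun m s => (m == a) || s) false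

def testB (p : List Bool) (k : ℕ) : Bool :=
  hasTrue p && (1 ≤ (parse p).1 : Bool) &&
    elemB (encode (parse p).2) (Sset ((parse p).1 - 1) k) && sumOK ((parse p).1 - 1) k

/-- The universal tuatara machine. -/
def Wmach : List Bool →. List Bool := fun p =>
  (Nat.rfind fun k => Part.some (testB p k)).bind fun _ =>
    ((ofNat Code ((parse p).1 - 1)).eval (encode (parse p).2)).bind fun m =>
      Part.ofOption (decode m)

-- Computability
theorem natOf_primrec : Primrec natOf :=
  Primrec.list_foldl .id (Primrec.const 1)
    ((Primrec.cond (Primrec.snd.comp .snd)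
        (Primrec.succ.comp (Primrec.nat_double.comp (Primrec.fst.comp .snd)))
        (Primrec.nat_double.comp (Primrec.fst.comp .snd)))).to₂ |>.of_eq fun l => by
      congr

theorem parse_primrec : Primrec parse := by
  have := Primrec.list_rec (Primrec.id (α := List Bool))
    (Primrec.const ((0 : ℕ), ([] : List Bool)))
    (show Primrec₂ fun (_ : List Bool) (q : Bool × List Bool × (ℕ × List Bool)) =>
        if q.1 then ((0 : ℕ), q.2.1) else (q.2.2.1 + 1, q.2.2.2) from
      Primrec.ite (Primrec.eq.comp (Primrec.fst.comp .snd) (Primrec.const true))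
        (Primrec.pair (Primrec.const 0) (Primrec.fst.comp (Primrec.snd.comp .snd)))
        (Primrec.pair (Primrec.succ.comp (Primrec.fst.comp (Primrec.snd.comp (Primrec.snd.comp .snd))))
          (Primrec.snd.comp (Primrec.snd.comp (Primrec.snd.comp .snd)))))
  refine this.of_eq fun l => ?_
  induction l with
  | nil => rfl
  | cons b t ih => cases b <;> simp [parse, ← ih] <;> rfl

theorem hasTrue_primrec : Primrec hasTrue :=
  Primrec.list_foldr .id (Primrec.const false)
    ((Primrec.cond (Primrec.fst.comp .snd) (Primrec.const true) (Primrec.snd.comp .snd))).to₂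
    |>.of_eq fun l => by
      unfold hasTrue; congr

theorem Sset_primrec : Primrec₂ Sset := by
  have hev : Primrec fun q : (ℕ × ℕ) × ℕ => (evaln q.1.2 (ofNat Code q.1.1) q.2).isSome :=
    Primrec.option_isSome.comp <| primrec_evaln.comp <|
      Primrec.pair (Primrec.pair (Primrec.snd.comp .fst)
        ((Primrec.ofNat Code).comp (Primrec.fst.comp .fst))) .snd
  exact (Primrec.listFilterMap (Primrec.list_range.comp .snd)
    ((Primrec.ite (Primrec.eq.comp hev (Primrec.const true))
      (Primrec.option_some.comp .snd) (Primrec.const Option.none))).to₂).to₂.of_eq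
    fun e k => by
      unfold Sset; congr

theorem nsList_primrec : Primrec₂ nsList :=
  (Primrec.listFilterMap (Sset_primrec.comp .fst .snd)
    ((Primrec.option_map (Primrec.decode₂.comp .snd) (natOf_primrec.comp .snd |>.to₂)).to₂)).to₂

theorem list_sum_primrec : Primrec (List.sum : List ℕ → ℕ) :=
  Primrec.list_foldr .id (Primrec.const 0)
    ((Primrec.nat_add.comp (Primrec.fst.comp .snd) (Primrec.snd.comp .snd))).to₂ |>.of_eq
    fun l => by induction l with | nil => rfl | cons a t ih => simpa using congrArg (a + ·) ih

theorem list_prod_primrec : Primrec (List.prod : List ℕ → ℕ) :=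
  Primrec.list_foldr .id (Primrec.const 1)
    ((Primrec.nat_mul.comp (Primrec.fst.comp .snd) (Primrec.snd.comp .snd))).to₂ |>.of_eq
    fun l => by induction l with | nil => rfl | cons a t ih => simpa using congrArg (a * ·) ih

theorem sumOK_primrec : Primrec₂ sumOK := by
  have hns : Primrec fun q : ℕ × ℕ => nsList q.1 q.2 := nsList_primrec.comp .fst .snd
  have hprod : Primrec fun q : ℕ × ℕ => (nsList q.1 q.2).prod := list_prod_primrec.comp hns
  have hmap : Primrec fun q : ℕ × ℕ => (nsList q.1 q.2).map (fun n => (nsList q.1 q.2).prod / n) :=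
    Primrec.list_map hns (Primrec.nat_div.comp (hprod.comp .fst) .snd).to₂
  exact ((Primrec.nat_le.comp (list_sum_primrec.comp hmap) hprod).decide).to₂.of_eq fun e k => by
    unfold sumOK; by_cases h : ((nsList e k).map (fun n => (nsList e k).prod / n)).sum ≤ (nsList e k).prod <;> simp [h]

theorem elemB_primrec : Primrec₂ elemB := by
  unfold elemB
  exact (Primrec.list_foldr .snd (Primrec.const false)
    ((Primrec.cond (Primrec.beq.comp (Primrec.fst.comp .snd) (Primrec.fst.comp .fst))
      (Primrec.const true) (Primrec.snd.comp .snd))).to₂).to₂.of_eq fun a l => by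
    congr

theorem testB_primrec : Primrec₂ testB := by
  have hp : Primrec fun q : List Bool × ℕ => parse q.1 := parse_primrec.comp .fst
  have h1 : Primrec fun q : List Bool × ℕ => hasTrue q.1 := hasTrue_primrec.comp .fst
  have h2 : Primrec fun q : List Bool × ℕ => (decide (1 ≤ (parse q.1).1) : Bool) :=
    (Primrec.nat_le.comp (Primrec.const 1) (Primrec.fst.comp hp)).decide
  have he : Primrec fun q : List Bool × ℕ => (parse q.1).1 - 1 :=
    Primrec.nat_sub.comp (Primrec.fst.comp hp) (Primrec.const 1)
  have h3 : Primrec fun q : List Bool × ℕ => elemB (encode (parse q.1).2) (Sset ((parse q.1).1 - 1) q.2) :=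
    elemB_primrec.comp (Primrec.encode.comp (Primrec.snd.comp hp)) (Sset_primrec.comp he .snd)
  have h4 : Primrec fun q : List Bool × ℕ => sumOK ((parse q.1).1 - 1) q.2 :=
    sumOK_primrec.comp he .snd
  have band : Primrec₂ (· && · : Bool → Bool → Bool) := Primrec.dom_bool₂ _
  exact ((band.comp (band.comp (band.comp h1 h2) h3) h4)).to₂

theorem Wmach_partrec : Partrec Wmach := by
  have h1 : Partrec fun p : List Bool => Nat.rfind fun k => Part.some (testB p k) :=
    Partrec.rfind (((testB_primrec.to_comp).partrec₂ : Partrec₂ _).of_eq fun n => rfl)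
  have heval : Partrec fun p : List Bool =>
      ((ofNat Code ((parse p).1 - 1)).eval (encode (parse p).2)) :=
    eval_part.comp
      ((Primrec.ofNat Code).comp (Primrec.nat_sub.comp (Primrec.fst.comp parse_primrec) (Primrec.const 1))).to_comp
      (Primrec.encode.comp (Primrec.snd.comp parse_primrec)).to_comp
  have h2 : Partrec fun p : List Bool =>
      ((ofNat Code ((parse p).1 - 1)).eval (encode (parse p).2)).bind fun m =>
        Part.ofOption (decode m) :=
    heval.bind
      ((Computable.ofOption ((Computable.decode (α := List Bool)).comp Computable.snd)
        : Partrec fun q : List Bool × ℕ => (Part.ofOption (decode q.2) : Part (List Bool)))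
        : Partrec₂ fun (_ : List Bool) (m : ℕ) => (Part.ofOption (decode m) : Part (List Bool)))
  exact (h1.bind ((h2.comp Computable.fst).to₂ : Partrec₂ _)).of_eq fun p => rfl


theorem foldl_bit_bits : ∀ (x : List Bool) (n : ℕ), n ≠ 0 →
    (x.foldl (fun n b => Nat.bit b n) n).bits = x.reverse ++ n.bits
  | [], n, _ => by simp
  | b :: x, n, hn => by
    have hb : Nat.bit b n ≠ 0 := by
      cases b <;> simp [Nat.bit] <;> omega
    simp only [List.foldl_cons, List.reverse_cons, List.append_assoc]
    rw [foldl_bit_bits x _ hb, Nat.bits_append_bit n b (fun h => absurd h hn)]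
    simp

theorem natOf_bits (x : List Bool) : (natOf x).bits = x.reverse ++ [true] := by
  simpa [natOf, Nat.one_bits] using foldl_bit_bits x 1 one_ne_zero

theorem bin_natOf (x : List Bool) : bin (natOf x) = x := by
  simp [bin, natOf_bits]

theorem natOf_injective : Function.Injective natOf := fun x y h => by
  rw [← bin_natOf x, ← bin_natOf y, h]

theorem foldr_bit_bits (n : ℕ) : n.bits.foldr (fun b m => Nat.bit b m) 0 = n := by
  induction n using Nat.binaryRec' with
  | zero => simp
  | bit b n h ih =>
    rw [Nat.bits_append_bit n b h]
    simp [ih]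

theorem bits_injective : Function.Injective Nat.bits := fun m n h => by
  rw [← foldr_bit_bits m, ← foldr_bit_bits n, h]

theorem natOf_pos (x : List Bool) : 1 ≤ natOf x := by
  rcases Nat.eq_zero_or_pos (natOf x) with h | h
  · have : (natOf x).bits = x.reverse ++ [true] := natOf_bits x
    rw [h] at this
    simp [Nat.zero_bits] at this
  · exact h

theorem bits_foldr_len : ∀ l : List Bool, (l.foldr (fun b m => Nat.bit b m) 0).bits.length ≤ l.length
  | [] => by simp
  | b :: l => by
    set v := l.foldr (fun b m => Nat.bit b m) 0 with hv
    by_cases h0 : Nat.bit b v = 0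
    · simp [List.foldr_cons, ← hv, h0]
    · have hb : v = 0 → b = true := by
        intro hv0
        rcases b with _ | _
        · exfalso; apply h0; simp [hv0, Nat.bit]
        · rfl
      simp only [List.foldr_cons, ← hv, Nat.bits_append_bit v b hb, List.length_cons]
      exact Nat.succ_le_succ (bits_foldr_len l)

theorem natOf_bin {n : ℕ} (hn : 1 ≤ n) : natOf (bin n) = n := by
  obtain ⟨l, hl⟩ : ∃ l, n.bits = l ++ [true] := by
    rcases List.eq_nil_or_concat n.bits with h | ⟨l, b, h⟩
    · exfalso
      have := foldr_bit_bits n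
      rw [h] at this; simp at this; omega
    · refine ⟨l, ?_⟩
      rw [h, List.concat_eq_append]
      rcases b with _ | _
      · exfalso
        have h1 := foldr_bit_bits n
        rw [h, List.concat_eq_append, List.foldr_append] at h1
        have h2 : (l.foldr (fun b m => Nat.bit b m) 0) = n := by
          simpa [Nat.bit] using h1
        have h3 := bits_foldr_len l
        rw [h2, h, List.concat_eq_append] at h3
        simp at h3
      · rfl
  apply bits_injective
  rw [natOf_bits, bin, hl]
  simp


theorem foldl_bit_lt : ∀ (x : List Bool) (n : ℕ), x.foldl (fun n b => Nat.bit b n) n < (n + 1) * 2 ^ x.length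
  | [], n => by simp
  | b :: x, n => by
    have h := foldl_bit_lt x (Nat.bit b n)
    refine lt_of_lt_of_le h ?_
    have : Nat.bit b n + 1 ≤ (n + 1) * 2 := by cases b <;> simp [Nat.bit] <;> omega
    calc (Nat.bit b n + 1) * 2 ^ x.length ≤ (n + 1) * 2 * 2 ^ x.length :=
          Nat.mul_le_mul_right _ this
      _ = (n + 1) * 2 ^ (b :: x).length := by ring_nf; rw [List.length_cons]; ring

theorem natOf_lt (x : List Bool) : natOf x < 2 ^ (x.length + 1) := by
  have := foldl_bit_lt x 1
  simpa [natOf, pow_succ, mul_comm] using this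

theorem foldl_bit_ge : ∀ (x : List Bool) (n : ℕ), n * 2 ^ x.length ≤ x.foldl (fun n b => Nat.bit b n) n
  | [], n => by simp
  | b :: x, n => by
    have h := foldl_bit_ge x (Nat.bit b n)
    refine le_trans ?_ h
    have : n * 2 ≤ Nat.bit b n := by cases b <;> simp [Nat.bit] <;> omega
    calc n * 2 ^ (b :: x).length = n * 2 * 2 ^ x.length := by
          rw [List.length_cons]; ring
      _ ≤ Nat.bit b n * 2 ^ x.length := Nat.mul_le_mul_right _ this

/-- Parse a string into (number of leading zeros, remainder after first one). -/

theorem parse_replicate (i : ℕ) (x : List Bool) :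
    parse (List.replicate i false ++ true :: x) = (i, x) := by
  induction i with
  | zero => simp [parse]
  | succ n ih => simp [List.replicate_succ, parse, ih]

theorem parse_recover : ∀ p : List Bool, true ∈ p →
    p = List.replicate (parse p).1 false ++ true :: (parse p).2
  | [], h => by simp at h
  | b :: t, h => by
    rcases b with _ | _
    · have ht : true ∈ t := by simpa using h
      have := parse_recover t ht
      simp only [parse, if_neg Bool.false_ne_true]
      conv_lhs => rw [this]
      simp [List.replicate_succ]
    · simp [parse]

theorem natOf_parse_ge (p : List Bool) (h : true ∈ p) :
    2 ^ (parse p).1 * natOf (parse p).2 ≤ natOf p := by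
  set i := (parse p).1
  set x := (parse p).2
  conv_rhs => rw [parse_recover p h]
  have h1 : natOf (List.replicate i false ++ true :: x)
      = (x.foldl (fun n b => Nat.bit b n) (Nat.bit true ((List.replicate i false).foldl (fun n b => Nat.bit b n) 1))) := by
    simp [natOf, List.foldl_append]
  rw [h1]
  have hrep : ∀ (j n : ℕ), (List.replicate j false).foldl (fun n b => Nat.bit b n) n = 2 ^ j * n := by
    intro j
    induction j with
    | zero => simp
    | succ m ih =>
      intro n
      rw [List.replicate_succ, List.foldl_cons, ih]
      simp [Nat.bit, pow_succ]
      ring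
  rw [hrep i 1]
  have h3 : (2 : ℕ) ^ i * 2 ^ (x.length + 1) ≤ Nat.bit true (2 ^ i * 1) * 2 ^ x.length := by
    simp [Nat.bit, pow_succ]
    nlinarith [pow_pos (show (0:ℕ) < 2 by norm_num) i, pow_pos (show (0:ℕ) < 2 by norm_num) x.length]
  calc 2 ^ i * natOf x ≤ 2 ^ i * 2 ^ (x.length + 1) :=
        Nat.mul_le_mul_left _ (le_of_lt (natOf_lt x))
    _ ≤ Nat.bit true (2 ^ i * 1) * 2 ^ x.length := h3
    _ ≤ x.foldl (fun n b => Nat.bit b n) (Nat.bit true (2 ^ i * 1)) := foldl_bit_ge x _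
-- semantic lemmas (appended to prior context in final file)
open Nat.Partrec (Code)
open Nat.Partrec.Code Encodable Denumerable

theorem hasTrue_iff {p : List Bool} : hasTrue p = true ↔ true ∈ p := by
  induction p with
  | nil => simp [hasTrue]
  | cons b t ih => cases b <;> simp [hasTrue] at ih ⊢ <;> simp [ih]

theorem elemB_iff {a : ℕ} {l : List ℕ} : elemB a l = true ↔ a ∈ l := by
  induction l with
  | nil => simp [elemB]
  | cons m t ih =>
    simp [elemB] at ih ⊢
    rw [ih]
    exact or_congr eq_comm Iff.rfl

theorem mem_Sset {m e k : ℕ} : m ∈ Sset e k ↔ m < k ∧ (evaln k (ofNat Code e) m).isSome := by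
  simp only [Sset, List.mem_filterMap, List.mem_range]
  constructor
  · rintro ⟨a, ha, h⟩
    by_cases hs : (evaln k (ofNat Code e) a).isSome <;> simp [hs] at h
    exact ⟨h ▸ ha, h ▸ hs⟩
  · rintro ⟨h1, h2⟩
    exact ⟨m, h1, by simp [h2]⟩

theorem Sset_mono {e k K : ℕ} (h : k ≤ K) {m : ℕ} (hm : m ∈ Sset e k) : m ∈ Sset e K := by
  rw [mem_Sset] at hm ⊢
  obtain ⟨y, hy⟩ := Option.isSome_iff_exists.1 hm.2
  exact ⟨lt_of_lt_of_le hm.1 h, Option.isSome_iff_exists.2 ⟨y, evaln_mono h hy⟩⟩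

theorem Sset_nodup (e k : ℕ) : (Sset e k).Nodup := by
  apply List.Nodup.filterMap _ (List.nodup_range (n := k))
  intro a a' b hb hb'
  by_cases h : (evaln k (ofNat Code e) a).isSome <;> simp [h] at hb
  by_cases h' : (evaln k (ofNat Code e) a').isSome <;> simp [h'] at hb'
  omega

theorem mem_nsList {n e k : ℕ} :
    n ∈ nsList e k ↔ ∃ x : List Bool, encode x ∈ Sset e k ∧ natOf x = n := by
  simp only [nsList, List.mem_filterMap, Option.map_eq_some_iff]
  constructor
  · rintro ⟨m, hm, x, hx, hn⟩
    exact ⟨x, (decode₂_eq_some.1 hx) ▸ hm, hn⟩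
  · rintro ⟨x, hx, hn⟩
    exact ⟨encode x, hx, x, decode₂_eq_some.2 rfl, hn⟩

theorem nsList_nodup (e k : ℕ) : (nsList e k).Nodup := by
  apply List.Nodup.filterMap _ (Sset_nodup e k)
  rintro a a' b hb hb'
  simp only [Option.mem_def, Option.map_eq_some_iff] at hb hb'
  obtain ⟨x, hx, hb⟩ := hb
  obtain ⟨x', hx', hb'⟩ := hb'
  have : x = x' := natOf_injective (hb.trans hb'.symm)
  rw [← decode₂_eq_some.1 hx, ← decode₂_eq_some.1 hx', this]

theorem nsList_pos {n e k : ℕ} (h : n ∈ nsList e k) : 0 < n := by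
  obtain ⟨x, _, hn⟩ := mem_nsList.1 h
  exact hn ▸ natOf_pos x

theorem list_sum_cast (l : List ℕ) :
    ((l.sum : ℕ) : ℝ≥0∞) = (l.map fun n => ((n : ℕ) : ℝ≥0∞)).sum := Nat.cast_list_sum l

theorem sumOK_iff {e k : ℕ} :
    sumOK e k = true ↔ ((nsList e k).map fun n => ((n : ℕ) : ℝ≥0∞)⁻¹).sum ≤ 1 := by
  set l := nsList e k with hl
  have hpos : ∀ n ∈ l, 0 < n := fun n hn => nsList_pos (hl ▸ hn)
  have hP : 0 < l.prod := List.prod_pos hpos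
  have hPne : ((l.prod : ℕ) : ℝ≥0∞) ≠ 0 :=
    Nat.cast_ne_zero.2 (Nat.pos_iff_ne_zero.1 hP)
  have hPtop : ((l.prod : ℕ) : ℝ≥0∞) ≠ ⊤ := ENNReal.natCast_ne_top _
  have key : ((((l.map fun n => l.prod / n).sum : ℕ)) : ℝ≥0∞)
      = ((l.prod : ℕ) : ℝ≥0∞) * (l.map fun n => ((n : ℕ) : ℝ≥0∞)⁻¹).sum := by
    rw [Nat.cast_list_sum, List.map_map, ← List.sum_map_mul_left]
    congr 1
    apply List.map_congr_left
    intro n hn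
    have hdvd : n ∣ l.prod := List.dvd_prod hn
    have hn0 : (n : ℝ≥0∞) ≠ 0 := by simp [Nat.pos_iff_ne_zero.1 (hpos n hn)]
    have hmul : ((n : ℕ) : ℝ≥0∞) * ((l.prod / n : ℕ) : ℝ≥0∞) = ((l.prod : ℕ) : ℝ≥0∞) := by
      rw [← Nat.cast_mul, Nat.mul_div_cancel' hdvd]
    simp only [Function.comp]
    rw [← hmul, mul_comm ((n : ℕ) : ℝ≥0∞) _, mul_assoc,
      ENNReal.mul_inv_cancel hn0 (ENNReal.natCast_ne_top n), mul_one]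
  rw [show sumOK e k = (decide ((l.map fun n => l.prod / n).sum ≤ l.prod)) from rfl]
  rw [decide_eq_true_iff]
  constructor
  · intro h
    have := (Nat.cast_le (α := ℝ≥0∞)).2 h
    rw [key] at this
    calc (l.map fun n => ((n : ℕ) : ℝ≥0∞)⁻¹).sum
        = ((l.prod : ℕ) : ℝ≥0∞)⁻¹ * (((l.prod : ℕ) : ℝ≥0∞) * (l.map fun n => ((n:ℕ):ℝ≥0∞)⁻¹).sum) := by
          rw [← mul_assoc, ENNReal.inv_mul_cancel hPne hPtop, one_mul]
      _ ≤ ((l.prod : ℕ) : ℝ≥0∞)⁻¹ * ((l.prod : ℕ) : ℝ≥0∞) := by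
          exact mul_le_mul_right this _
      _ = 1 := ENNReal.inv_mul_cancel hPne hPtop
  · intro h
    have : ((((l.map fun n => l.prod / n).sum : ℕ)) : ℝ≥0∞) ≤ ((l.prod : ℕ) : ℝ≥0∞) := by
      rw [key]
      calc ((l.prod : ℕ) : ℝ≥0∞) * (l.map fun n => ((n:ℕ):ℝ≥0∞)⁻¹).sum
          ≤ ((l.prod : ℕ) : ℝ≥0∞) * 1 := mul_le_mul_right h _
        _ = _ := mul_one _
    exact_mod_cast this
-- chunk 6 appended
/-- The set of strings admitted for code `e`. -/
def Aset (e : ℕ) : Set (List Bool) := {x | ∃ k, encode x ∈ Sset e k ∧ sumOK e k = true}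

theorem list_sum_toFinset {l : List ℕ} (h : l.Nodup) (f : ℕ → ℝ≥0∞) :
    ∑ n ∈ l.toFinset, f n = (l.map f).sum := by
  induction l with
  | nil => simp
  | cons a t ih =>
    obtain ⟨ha, ht⟩ := List.nodup_cons.1 h
    rw [List.toFinset_cons, Finset.sum_insert (by simpa using ha), List.map_cons, List.sum_cons,
      ih ht]

theorem tsum_Aset_le (e : ℕ) :
    ∑' x : Aset e, ((natOf (x : List Bool) : ℕ) : ℝ≥0∞)⁻¹ ≤ 1 := by
  rw [ENNReal.tsum_eq_iSup_sum]
  apply iSup_le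
  intro s
  rcases s.eq_empty_or_nonempty with rfl | hne
  · simp
  have hwit : ∀ x : Aset e, ∃ k, encode (x : List Bool) ∈ Sset e k ∧ sumOK e k = true :=
    fun x => x.2
  set kf : Aset e → ℕ := fun x => (hwit x).choose with hkf
  obtain ⟨x0, _, hx0⟩ := Finset.exists_mem_eq_sup s hne kf
  set K := s.sup kf with hK
  have hsumOK : sumOK e K = true := by
    show sumOK e K = true
    rw [hx0]
    exact (hwit x0).choose_spec.2
  have hmem : ∀ x ∈ s, natOf (x : List Bool) ∈ nsList e K := by
    intro x hx
    refine mem_nsList.2 ⟨(x : List Bool), ?_, rfl⟩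
    exact Sset_mono (Finset.le_sup (f := kf) hx) (hwit x).choose_spec.1
  have hinj : Set.InjOn (fun x : Aset e => natOf (x : List Bool)) s := by
    intro a _ b _ hab
    exact Subtype.ext (natOf_injective hab)
  calc ∑ x ∈ s, ((natOf (x : List Bool) : ℕ) : ℝ≥0∞)⁻¹
      = ∑ n ∈ s.image (fun x : Aset e => natOf (x : List Bool)), ((n : ℕ) : ℝ≥0∞)⁻¹ :=
        (Finset.sum_image (f := fun n : ℕ => ((n : ℕ) : ℝ≥0∞)⁻¹) (fun a ha b hb h => hinj ha hb h)).symm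
    _ ≤ ∑ n ∈ (nsList e K).toFinset, ((n : ℕ) : ℝ≥0∞)⁻¹ := by
        apply Finset.sum_le_sum_of_subset
        intro n hn
        obtain ⟨x, hx, rfl⟩ := Finset.mem_image.1 hn
        exact List.mem_toFinset.2 (hmem x hx)
    _ = ((nsList e K).map fun n => ((n : ℕ) : ℝ≥0∞)⁻¹).sum :=
        list_sum_toFinset (nsList_nodup e K) _
    _ ≤ 1 := sumOK_iff.1 hsumOK

/-- The equivalence between `Ups A` and `A`. -/
noncomputable def upsEquiv (A : Set (List Bool)) : ↥(Ups A) ≃ ↥A where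
  toFun := fun n => ⟨bin (n : ℕ), n.2.2⟩
  invFun := fun x => ⟨natOf (x : List Bool), natOf_pos _, by rw [bin_natOf]; exact x.2⟩
  left_inv := fun n => Subtype.ext (natOf_bin n.2.1)
  right_inv := fun x => Subtype.ext (bin_natOf _)

/-- `zeta` as a sum over the domain. -/
theorem zeta_eq (f : List Bool →. List Bool) :
    zeta f = ∑' x : dom f, ((natOf (x : List Bool) : ℕ) : ℝ≥0∞)⁻¹ := by
  unfold zeta
  rw [← Equiv.tsum_eq (upsEquiv (dom f)) (fun x => ((natOf (x : List Bool) : ℕ) : ℝ≥0∞)⁻¹)]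
  apply tsum_congr
  intro n
  have : natOf ((upsEquiv (dom f)) n : List Bool) = (n : ℕ) := natOf_bin n.2.1
  rw [this]
theorem testB_spec {p : List Bool} {k : ℕ} (h : testB p k = true) :
    true ∈ p ∧ 1 ≤ (parse p).1 ∧
      encode (parse p).2 ∈ Sset ((parse p).1 - 1) k ∧ sumOK ((parse p).1 - 1) k = true := by
  unfold testB at h
  simp only [Bool.and_eq_true] at h
  obtain ⟨⟨⟨h1, h2⟩, h3⟩, h4⟩ := h
  exact ⟨hasTrue_iff.1 h1, by simpa using h2, elemB_iff.1 h3, h4⟩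

theorem dom_W {p : List Bool} (hp : p ∈ dom Wmach) : ∃ k, testB p k = true := by
  obtain ⟨y, hy⟩ := Part.dom_iff_mem.1 hp
  obtain ⟨v, hv, -⟩ := Part.mem_bind_iff.1 hy
  exact ⟨v, (Part.mem_some_iff.1 (Nat.rfind_spec hv)).symm⟩

theorem mem_Aset_of_dom {p : List Bool} (hp : p ∈ dom Wmach) :
    (parse p).2 ∈ Aset ((parse p).1 - 1) := by
  obtain ⟨k, hk⟩ := dom_W hp
  obtain ⟨-, -, h3, h4⟩ := testB_spec hk
  exact ⟨k, h3, h4⟩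

theorem zeta_W_le : zeta Wmach ≤ 1 := by
  rw [zeta_eq]
  set F : dom Wmach → Σ e : ℕ, Aset e := fun p =>
    ⟨(parse (p : List Bool)).1 - 1, ⟨(parse (p : List Bool)).2, mem_Aset_of_dom p.2⟩⟩ with hF
  have hrecover : ∀ p : dom Wmach, (p : List Bool) =
      List.replicate ((F p).1 + 1) false ++ true :: ((F p).2 : List Bool) := by
    intro p
    obtain ⟨k, hk⟩ := dom_W p.2
    obtain ⟨h1, h2, -, -⟩ := testB_spec hk
    have := parse_recover (p : List Bool) h1
    simp only [hF]
    rw [Nat.sub_add_cancel h2]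
    exact this
  have hFinj : Function.Injective F := by
    intro p q hpq
    have := congrArg (fun s : Σ e : ℕ, Aset e =>
      List.replicate (s.1 + 1) false ++ true :: (s.2 : List Bool)) hpq
    apply Subtype.ext
    rw [hrecover p, hrecover q]
    exact this
  have hbound : ∀ p : dom Wmach,
      ((natOf (p : List Bool) : ℕ) : ℝ≥0∞)⁻¹ ≤
        (2 : ℝ≥0∞)⁻¹ ^ ((F p).1 + 1) * ((natOf ((F p).2 : List Bool) : ℕ) : ℝ≥0∞)⁻¹ := by
    intro p
    obtain ⟨k, hk⟩ := dom_W p.2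
    obtain ⟨h1, h2, -, -⟩ := testB_spec hk
    have hge : 2 ^ ((F p).1 + 1) * natOf ((F p).2 : List Bool) ≤ natOf (p : List Bool) := by
      have := natOf_parse_ge (p : List Bool) h1
      simpa only [hF, Nat.sub_add_cancel h2] using this
    calc ((natOf (p : List Bool) : ℕ) : ℝ≥0∞)⁻¹
        ≤ (((2 ^ ((F p).1 + 1) * natOf ((F p).2 : List Bool) : ℕ)) : ℝ≥0∞)⁻¹ :=
          ENNReal.inv_le_inv' (Nat.cast_le.2 hge)
      _ = (2 : ℝ≥0∞)⁻¹ ^ ((F p).1 + 1) * ((natOf ((F p).2 : List Bool) : ℕ) : ℝ≥0∞)⁻¹ := by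
          rw [Nat.cast_mul, Nat.cast_pow,
            ENNReal.mul_inv (Or.inl (by positivity)) (Or.inl (by simp)),
            ENNReal.inv_pow]
          norm_num
  calc ∑' p : dom Wmach, ((natOf (p : List Bool) : ℕ) : ℝ≥0∞)⁻¹
      ≤ ∑' p : dom Wmach,
          (2 : ℝ≥0∞)⁻¹ ^ ((F p).1 + 1) * ((natOf ((F p).2 : List Bool) : ℕ) : ℝ≥0∞)⁻¹ :=
        ENNReal.tsum_le_tsum hbound
    _ ≤ ∑' s : Σ e : ℕ, Aset e,
          (2 : ℝ≥0∞)⁻¹ ^ (s.1 + 1) * ((natOf ((s.2 : List Bool)) : ℕ) : ℝ≥0∞)⁻¹ :=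
        ENNReal.tsum_comp_le_tsum_of_injective hFinj _
    _ = ∑' e : ℕ, ∑' x : Aset e,
          (2 : ℝ≥0∞)⁻¹ ^ (e + 1) * ((natOf ((x : List Bool)) : ℕ) : ℝ≥0∞)⁻¹ :=
        ENNReal.tsum_sigma' _
    _ ≤ ∑' e : ℕ, (2 : ℝ≥0∞)⁻¹ ^ (e + 1) := by
        apply ENNReal.tsum_le_tsum
        intro e
        rw [ENNReal.tsum_mul_left]
        calc (2 : ℝ≥0∞)⁻¹ ^ (e + 1) * ∑' x : Aset e, ((natOf ((x : List Bool)) : ℕ) : ℝ≥0∞)⁻¹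
            ≤ (2 : ℝ≥0∞)⁻¹ ^ (e + 1) * 1 := mul_le_mul_right (tsum_Aset_le e) _
          _ = _ := mul_one _
    _ = 1 := by
        rw [ENNReal.tsum_geometric_add_one, ENNReal.one_sub_inv_two, inv_inv]
        exact ENNReal.inv_mul_cancel (by norm_num) (by norm_num)
theorem sumOK_all {V : List Bool →. List Bool} {c : Code}
    (hc : eval c = fun n => Part.bind (decode (α := List Bool) n) fun a => (V a).map encode)
    (hzV : zeta V ≤ 1) : ∀ k, sumOK (encode c) k = true := by
  intro k
  rw [sumOK_iff]
  have hUps : ∀ n ∈ nsList (encode c) k, n ∈ Ups (dom V) := by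
    intro n hn
    obtain ⟨x', hx', rfl⟩ := mem_nsList.1 hn
    have hev : (evaln k c (encode x')).isSome := by
      have := (mem_Sset.1 hx').2
      rwa [Denumerable.ofNat_encode] at this
    obtain ⟨y, hy⟩ := Option.isSome_iff_exists.1 hev
    have hy' : y ∈ eval c (encode x') := evaln_sound hy
    rw [hc] at hy'
    simp only [Encodable.encodek, Part.coe_some, Part.bind_some] at hy'
    obtain ⟨v, hv, -⟩ := (Part.mem_map_iff encode).1 hy'
    have hdom : x' ∈ dom V := Part.dom_iff_mem.2 ⟨v, hv⟩
    exact ⟨natOf_pos x', by rwa [bin_natOf]⟩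
  set l := nsList (encode c) k with hl
  calc (l.map fun n => ((n : ℕ) : ℝ≥0∞)⁻¹).sum
      = ∑ n ∈ l.toFinset, ((n : ℕ) : ℝ≥0∞)⁻¹ :=
        (list_sum_toFinset (nsList_nodup _ _) _).symm
    _ = ∑ n ∈ l.toFinset, Set.indicator (Ups (dom V)) (fun n => ((n : ℕ) : ℝ≥0∞)⁻¹) n :=
        Finset.sum_congr rfl fun n hn =>
          (Set.indicator_of_mem (hUps n (List.mem_toFinset.1 hn))
            (fun n : ℕ => ((n : ℕ) : ℝ≥0∞)⁻¹)).symm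
    _ ≤ ∑' n : ℕ, Set.indicator (Ups (dom V)) (fun n => ((n : ℕ) : ℝ≥0∞)⁻¹) n :=
        ENNReal.sum_le_tsum _
    _ = ∑' n : Ups (dom V), ((n : ℕ) : ℝ≥0∞)⁻¹ := (tsum_subtype _ _).symm
    _ ≤ 1 := hzV


/-- There exists a universal tuatara machine. -/
theorem stmt_9 :
    ∃ W : List Bool →. List Bool, Partrec W ∧ zeta W ≤ 1 ∧
      ∀ V : List Bool →. List Bool, Partrec V → zeta V ≤ 1 →
        ∃ c : ℕ, ∀ x ∈ dom V, ∃ p : List Bool, p.length ≤ x.length + c ∧ W p = V x := by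
  refine ⟨Wmach, Wmach_partrec, zeta_W_le, ?_⟩
  intro V hV hzV
  obtain ⟨c, hc⟩ := Nat.Partrec.Code.exists_code.1 hV
  refine ⟨encode c + 2, ?_⟩
  intro x hx
  set p : List Bool := List.replicate (encode c + 1) false ++ true :: x with hp
  have hlen : p.length ≤ x.length + (encode c + 2) := by
    simp [hp]
    omega
  refine ⟨p, hlen, ?_⟩
  have hparse : parse p = (encode c + 1, x) := parse_replicate _ _
  have hsub : (parse p).1 - 1 = encode c := by rw [hparse]; rfl
  have hx2 : (parse p).2 = x := by rw [hparse]
  have hcode : Denumerable.ofNat Code ((parse p).1 - 1) = c := by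
    rw [hsub, Denumerable.ofNat_encode]
  have heval : eval c (encode x) = (V x).map encode := by
    rw [hc]
    simp [Encodable.encodek]
  -- termination of the search
  have hdomE : (encode (α := List Bool) '' {x}).Nonempty := ⟨encode x, by simp⟩
  obtain ⟨y, hy⟩ := Part.dom_iff_mem.1 (hx : (V x).Dom)
  have hyE : encode y ∈ eval c (encode x) := by
    rw [heval]
    exact Part.mem_map encode hy
  obtain ⟨k1, hk1⟩ := evaln_complete.1 hyE
  set K := max k1 (encode x + 1) with hK
  have hSK : encode (α := List Bool) x ∈ Sset (encode c) K := by
    apply mem_Sset.2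
    constructor
    · omega
    · rw [Denumerable.ofNat_encode]
      exact Option.isSome_iff_exists.2 ⟨encode y, evaln_mono (le_max_left _ _) hk1⟩
  have htest : testB p K = true := by
    unfold testB
    rw [hsub, hx2]
    simp only [Bool.and_eq_true]
    refine ⟨⟨⟨?_, ?_⟩, ?_⟩, ?_⟩
    · exact hasTrue_iff.2 (by simp [hp])
    · simp [hparse]
    · exact elemB_iff.2 hSK
    · exact sumOK_all hc hzV K
  -- the two sides are equal
  have hrfind : (Nat.rfind fun k => Part.some (testB p k)).Dom := by
    apply Nat.rfind_dom.2
    exact ⟨K, Part.mem_some_iff.2 htest.symm, fun _ => trivial⟩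
  apply Part.ext
  intro z
  show z ∈ (Nat.rfind fun k => Part.some (testB p k)).bind
      (fun _ => ((Denumerable.ofNat Code ((parse p).1 - 1)).eval (encode (parse p).2)).bind
        fun m => Part.ofOption (decode m)) ↔ z ∈ V x
  rw [Part.mem_bind_iff]
  constructor
  · rintro ⟨v, -, hz⟩
    rw [hcode, hx2, heval] at hz
    obtain ⟨m, hm, hz⟩ := Part.mem_bind_iff.1 hz
    obtain ⟨w, hw, rfl⟩ := (Part.mem_map_iff encode).1 hm
    rw [Part.mem_ofOption] at hz
    simp only [Encodable.encodek, Option.mem_def, Option.some_inj] at hz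
    first
      | exact hz ▸ hw
      | exact hz.symm ▸ hw
  · intro hz
    refine ⟨(Nat.rfind fun k => Part.some (testB p k)).get hrfind, Part.get_mem hrfind, ?_⟩
    rw [hcode, hx2, heval]
    apply Part.mem_bind_iff.2
    exact ⟨encode z, Part.mem_map encode hz, by simp [Part.mem_ofOption, Encodable.encodek]⟩
end

section
/- For every universal self-delimiting Turing machine U and every universal Turing machine T, there exists a real β ∈ (0,1) which is Chaitin 1/2-random but not 1/2-K-random: there is a binary digit sequence x of β and a constant c ≥ 0 with H_U(x_0 ⋯ x_{m−1}) ≥ m/2 − c for all m ≥ 1, yet there is no constant c' ≥ 0 with K_T(x_0 ⋯ x_{m−1}) ≥ m/2 − c' for all m ≥ 1. -/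
open scoped ENNReal

section S13aux

lemma two_inv_pow_mul (n : ℕ) : (2:ℝ≥0∞)^n * (2:ℝ≥0∞)⁻¹^n = 1 := by
  rw [← mul_pow, ENNReal.mul_inv_cancel (by norm_num) (by norm_num), one_pow]



lemma prefixStr_length (x : ℕ → Bool) (m : ℕ) : (prefixStr x m).length = m := by
  simp [prefixStr]

lemma prefixStr_succ (x : ℕ → Bool) (n : ℕ) :
    prefixStr x (n+1) = prefixStr x n ++ [x n] := by
  simp [prefixStr, List.range_succ]

lemma getD_prefixStr (x : ℕ → Bool) {j m : ℕ} (h : j < m) :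
    (prefixStr x m).getD j false = x j := by
  simp [prefixStr, List.getD, List.getElem?_map, List.getElem?_range h]

def dil (l : List Bool) : List Bool := l.flatMap (fun b => [b, false])

def diluteFn (y : ℕ → Bool) : ℕ → Bool := fun i => if i % 2 = 0 then y (i/2) else false

lemma dil_prefix (y : ℕ → Bool) (k : ℕ) :
    prefixStr (diluteFn y) (2*k) = dil (prefixStr y k) := by
  induction k with
  | zero => simp [prefixStr, dil]
  | succ k ih =>
      have h2 : 2*(k+1) = (2*k) + 1 + 1 := by ring
      rw [h2, prefixStr_succ, prefixStr_succ, ih, prefixStr_succ]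
      have e1 : diluteFn y (2*k) = y k := by
        simp [diluteFn, Nat.mul_div_cancel_left, Nat.mul_mod_right]
      have e2 : diluteFn y (2*k+1) = false := by
        simp [diluteFn]
      rw [e1, e2]
      simp [dil, List.flatMap_append]

def enc0 (s : List Bool) : List Bool := s.flatMap (fun b => [b, b]) ++ [true, false]

lemma enc0_cons (a : Bool) (t : List Bool) : enc0 (a :: t) = a :: a :: enc0 t := by
  simp [enc0]

lemma enc0_nil : enc0 [] = [true, false] := by simp [enc0]

lemma enc0_prefix_eq : ∀ {s s' : List Bool}, enc0 s <+: enc0 s' → s = s' := by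
  intro s
  induction s with
  | nil =>
      intro s' h
      cases s' with
      | nil => rfl
      | cons a t =>
          exfalso
          rw [enc0_cons, enc0_nil, List.cons_prefix_cons] at h
          obtain ⟨rfl, h⟩ := h
          rw [List.cons_prefix_cons] at h
          exact absurd h.1 (by simp)
  | cons a t ih =>
      intro s' h
      cases s' with
      | nil =>
          exfalso
          have hl := h.length_le
          rw [enc0_cons] at hl
          simp [enc0, List.length_flatMap] at hl
      | cons a' t' =>
          rw [enc0_cons, enc0_cons] at h
          rw [List.cons_prefix_cons] at h
          obtain ⟨rfl, h⟩ := h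
          rw [List.cons_prefix_cons] at h
          obtain ⟨-, h⟩ := h
          rw [ih h]



lemma kraft_finset {F : Finset (List Bool)}
    (hpf : ∀ p ∈ F, ∀ q ∈ F, p <+: q → p = q) {N : ℕ}
    (hlen : ∀ p ∈ F, p.length ≤ N) :
    (∑ p ∈ F, 2^(N - p.length)) ≤ 2^N := by
  classical
  set Φ : (Σ p : F, (Fin (N - (p : List Bool).length) → Bool)) → (Fin N → Bool) :=
    fun z i => if h : (i : ℕ) < (z.1 : List Bool).length then (z.1 : List Bool)[(i : ℕ)]
      else z.2 ⟨(i : ℕ) - (z.1 : List Bool).length, by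
        have := hlen z.1 z.1.2; have := i.2; omega⟩ with hΦ
  have key : ∀ (p : F) (g : Fin (N - (p : List Bool).length) → Bool)
      (q : F) (h : Fin (N - (q : List Bool).length) → Bool),
      (p : List Bool).length ≤ (q : List Bool).length →
      Φ ⟨p, g⟩ = Φ ⟨q, h⟩ → (p : List Bool) = (q : List Bool) := by
    intro p g q h hle heq
    have hpre : (p : List Bool) <+: (q : List Bool) := by
      have htake : (p : List Bool) = (q : List Bool).take (p : List Bool).length := by
        apply List.ext_getElem
        · simp [List.length_take]
          omega
        · intro i hi hi2
          have hiN : i < N := lt_of_lt_of_le hi (hlen p p.2)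
          have := congrFun heq ⟨i, hiN⟩
          rw [hΦ] at this
          simp only at this
          rw [dif_pos hi, dif_pos (lt_of_lt_of_le hi hle)] at this
          simp [List.getElem_take]
          exact this
      rw [htake]; exact List.take_prefix _ _
    exact hpf _ p.2 _ q.2 hpre
  have hinj : Function.Injective Φ := by
    rintro ⟨p, g⟩ ⟨q, h⟩ heq
    have hpq : (p : List Bool) = (q : List Bool) := by
      rcases le_total (p : List Bool).length (q : List Bool).length with hle | hle
      · exact key p g q h hle heq
      · exact (key q h p g hle heq.symm).symm
    have hpq' : p = q := Subtype.ext hpq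
    subst hpq'
    suffices hgh : g = h by rw [hgh]
    funext j
    have hjN : (p : List Bool).length + (j : ℕ) < N := by have := j.2; omega
    have := congrFun heq ⟨(p : List Bool).length + (j : ℕ), hjN⟩
    rw [hΦ] at this
    simp only at this
    rw [dif_neg (by omega), dif_neg (by omega)] at this
    convert this using 2 <;> · apply Fin.ext; simp
  have hcard := Fintype.card_le_of_injective Φ hinj
  simp only [Fintype.card_sigma, Fintype.card_fun, Fintype.card_fin, Fintype.card_bool] at hcard
  calc (∑ p ∈ F, 2^(N - p.length))
      = ∑ p : F, 2^(N - (p : List Bool).length) := (Finset.sum_coe_sort F _).symm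
    _ ≤ 2^N := hcard

/-- Kraft's inequality for prefix-free sets of binary strings. -/
lemma kraft {S : Set (List Bool)} (hpf : ∀ p ∈ S, ∀ q ∈ S, p <+: q → p = q) :
    ∑' p : S, ((2:ℝ≥0∞)⁻¹) ^ (p : List Bool).length ≤ 1 := by
  rw [ENNReal.tsum_eq_iSup_sum]
  apply iSup_le
  intro F
  set G : Finset (List Bool) := F.image Subtype.val with hG
  have hsum : ∑ p ∈ F, ((2:ℝ≥0∞)⁻¹) ^ (p : List Bool).length
      = ∑ p ∈ G, ((2:ℝ≥0∞)⁻¹) ^ p.length := by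
    rw [hG, Finset.sum_image (by intro a _ b _ h; exact Subtype.ext h)]
  rw [hsum]
  set N := G.sup (fun p => p.length) with hN
  have hlen : ∀ p ∈ G, p.length ≤ N := fun p hp => Finset.le_sup hp
  have hpfG : ∀ p ∈ G, ∀ q ∈ G, p <+: q → p = q := by
    intro p hp q hq
    rw [hG] at hp hq
    simp only [Finset.mem_image] at hp hq
    obtain ⟨a, -, rfl⟩ := hp
    obtain ⟨b, -, rfl⟩ := hq
    exact hpf _ a.2 _ b.2
  have hc := kraft_finset hpfG hlen
  have hterm : ∀ p ∈ G, ((2:ℝ≥0∞)⁻¹) ^ p.length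
      = (2:ℝ≥0∞)^(N - p.length) * (2:ℝ≥0∞)⁻¹^N := by
    intro p hp
    have hl := hlen p hp
    have h2 : (2:ℝ≥0∞)⁻¹^N = (2:ℝ≥0∞)⁻¹^(N - p.length) * (2:ℝ≥0∞)⁻¹^p.length := by
      rw [← pow_add]
      congr 1
      omega
    rw [h2, ← mul_assoc, two_inv_pow_mul, one_mul]
  rw [Finset.sum_congr rfl hterm, ← Finset.sum_mul]
  have hcast : (∑ p ∈ G, (2:ℝ≥0∞)^(N - p.length))
      = ((∑ p ∈ G, 2^(N - p.length) : ℕ) : ℝ≥0∞) := by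
    push_cast
    rfl
  rw [hcast]
  calc ((∑ p ∈ G, 2^(N - p.length) : ℕ) : ℝ≥0∞) * (2:ℝ≥0∞)⁻¹^N
      ≤ ((2^N : ℕ) : ℝ≥0∞) * (2:ℝ≥0∞)⁻¹^N :=
        mul_le_mul_left (by exact_mod_cast hc) _
    _ = 1 := by push_cast; rw [two_inv_pow_mul]



lemma greedy {ι : Type} (σ : ι → List Bool)
    (hsum : ∑' i, ((2:ℝ≥0∞)⁻¹) ^ (σ i).length ≤ 4⁻¹) :
    ∃ y : ℕ → Bool, y 0 = true ∧ ∀ i, prefixStr y (σ i).length ≠ σ i := by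
  classical
  set f : List Bool → ι → ℝ≥0∞ := fun τ i =>
    if σ i <+: τ then 1
    else if τ <+: σ i then (2:ℝ≥0∞)^τ.length * (2:ℝ≥0∞)⁻¹^(σ i).length
    else 0 with hf
  set mm : List Bool → ℝ≥0∞ := fun τ => ∑' i, f τ i with hmm
  -- the per-index splitting identity
  have hsplit : ∀ τ i, f (τ ++ [false]) i + f (τ ++ [true]) i = 2 * f τ i := by
    intro τ i
    by_cases h1 : σ i <+: τ
    · have hft : f (τ ++ [false]) i = 1 := by
        rw [hf]; simp only [if_pos (h1.trans (List.prefix_append τ [false]))]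
      have hftt : f (τ ++ [true]) i = 1 := by
        rw [hf]; simp only [if_pos (h1.trans (List.prefix_append τ [true]))]
      have hfτ : f τ i = 1 := by rw [hf]; simp only [if_pos h1]
      rw [hft, hftt, hfτ]; norm_num
    · by_cases h2 : τ <+: σ i
      · obtain ⟨r, hr⟩ := h2
        cases r with
        | nil => exact absurd (by rw [← hr]; simp : σ i <+: τ) h1
        | cons b r' =>
          -- the child agreeing with b gets all the mass
          have hchild_same : f (τ ++ [b]) i
              = (2:ℝ≥0∞)^(τ.length + 1) * (2:ℝ≥0∞)⁻¹^(σ i).length := by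
            cases r' with
            | nil =>
                have hσ : σ i = τ ++ [b] := by rw [← hr]
                have hlen : (σ i).length = τ.length + 1 := by rw [hσ]; simp
                rw [hf]; simp only [if_pos (by rw [hσ] : σ i <+: τ ++ [b])]
                rw [hlen, two_inv_pow_mul]
            | cons c r'' =>
                have hpre : τ ++ [b] <+: σ i := ⟨c :: r'', by rw [← hr]; simp⟩
                have hnot : ¬ (σ i <+: τ ++ [b]) := by
                  intro hco
                  have h1' := hco.length_le
                  have h2' : (σ i).length = τ.length + (r''.length + 2) := by
                    rw [← hr]; simp
                  simp at h1'
                  omega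
                rw [hf]; simp only [if_neg hnot, if_pos hpre]
                simp
          have hchild_other : f (τ ++ [!b]) i = 0 := by
            have hlt : τ.length < (σ i).length := by rw [← hr]; simp
            have hget : (σ i)[τ.length]'hlt = b := by
              simp [← hr, List.getElem_append_right]
            have hn1 : ¬ (σ i <+: τ ++ [!b]) := by
              intro hco
              have := hco.getElem (i := τ.length) hlt
              rw [hget] at this
              rw [List.getElem_append_right (le_refl _)] at this
              simp at this
            have hn2 : ¬ (τ ++ [!b] <+: σ i) := by
              intro hco
              have := hco.getElem (i := τ.length) (by simp)
              rw [List.getElem_append_right (le_refl _)] at this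
              rw [hget] at this
              simp at this
            rw [hf]; simp only [if_neg hn1, if_neg hn2]
          have hfτ : f τ i = (2:ℝ≥0∞)^(τ.length) * (2:ℝ≥0∞)⁻¹^(σ i).length := by
            have hp : τ <+: σ i := ⟨b :: r', hr⟩
            rw [hf]; simp only [if_neg h1, if_pos hp]
          cases b with
          | false =>
              rw [show (!false) = true from rfl] at hchild_other
              rw [hchild_same, hchild_other, hfτ, add_zero, pow_succ]
              ring
          | true =>
              rw [show (!true) = false from rfl] at hchild_other
              rw [hchild_same, hchild_other, hfτ, zero_add, pow_succ]
              ring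
      · have hkill : ∀ b : Bool, f (τ ++ [b]) i = 0 := by
          intro b
          have hn2 : ¬ (τ ++ [b] <+: σ i) := fun hco =>
            h2 ((List.prefix_append τ [b]).trans hco)
          have hn1 : ¬ (σ i <+: τ ++ [b]) := by
            intro hco
            rcases Nat.lt_or_ge (σ i).length (τ ++ [b]).length with hl | hl
            · have : σ i <+: τ := List.prefix_of_prefix_length_le hco
                (List.prefix_append τ [b]) (by simp at hl ⊢; omega)
              exact h1 this
            · have : σ i = τ ++ [b] := hco.eq_of_length (le_antisymm hco.length_le hl)
              exact hn2 (by rw [this])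
          rw [hf]; simp only [if_neg hn1, if_neg hn2]
        have hfτ : f τ i = 0 := by rw [hf]; simp only [if_neg h1, if_neg h2]
        rw [hkill false, hkill true, hfτ]; norm_num
  have hmm_split : ∀ τ, mm (τ ++ [false]) + mm (τ ++ [true]) = 2 * mm τ := by
    intro τ
    rw [hmm]
    simp only
    rw [← ENNReal.tsum_add, ← ENNReal.tsum_mul_left]
    exact tsum_congr (hsplit τ)
  have hmm_nil : mm [] ≤ 4⁻¹ := by
    rw [hmm]
    refine le_trans (le_of_eq (tsum_congr ?_)) hsum
    intro i
    rw [hf]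
    by_cases h : σ i <+: []
    · rw [List.prefix_nil] at h
      simp [h]
    · simp only [if_neg h, if_pos List.nil_prefix]
      simp
  have hbase : mm [true] < 1 := by
    calc mm [true] ≤ mm [false] + mm [true] := self_le_add_left _ _
      _ = 2 * mm [] := by
          have := hmm_split []
          simpa using this
      _ ≤ 2 * 4⁻¹ := by exact mul_le_mul_right hmm_nil 2
      _ = 2⁻¹ := by
          rw [show ((4:ℝ≥0∞)) = 2 * 2 by norm_num,
            ENNReal.mul_inv (by norm_num) (by norm_num), ← mul_assoc,
            ENNReal.mul_inv_cancel (by norm_num) (by norm_num), one_mul]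
      _ < 1 := ENNReal.inv_lt_one.mpr (by norm_num)
  -- the greedy sequence of prefixes
  set step : List Bool → List Bool := fun τ =>
    τ ++ [if mm (τ ++ [true]) < 1 then true else false] with hstep
  set σseq : ℕ → List Bool := fun n => Nat.rec [true] (fun _ τ => step τ) n with hσseq
  have hσ0 : σseq 0 = [true] := rfl
  have hσsucc : ∀ n, σseq (n+1) = step (σseq n) := fun n => rfl
  have hlen : ∀ n, (σseq n).length = n + 1 := by
    intro n
    induction n with
    | zero => rfl
    | succ n ih => rw [hσsucc, hstep]; simp [ih]
  have hinv : ∀ n, mm (σseq n) < 1 := by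
    intro n
    induction n with
    | zero => exact hbase
    | succ n ih =>
        rw [hσsucc, hstep]
        simp only
        by_cases hc : mm (σseq n ++ [true]) < 1
        · rw [if_pos hc]; exact hc
        · rw [if_neg hc]
          push_neg at hc
          have hs := hmm_split (σseq n)
          have h2 : mm (σseq n ++ [false]) + 1 < 1 + 1 := by
            calc mm (σseq n ++ [false]) + 1
                ≤ mm (σseq n ++ [false]) + mm (σseq n ++ [true]) := add_le_add_right hc _
              _ = 2 * mm (σseq n) := hs
              _ < 2 * 1 := by
                  exact (ENNReal.mul_lt_mul_iff_right (by norm_num) (by norm_num)).mpr ih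
              _ = 1 + 1 := by norm_num
          exact (ENNReal.add_lt_add_iff_right (by norm_num : (1:ℝ≥0∞) ≠ ⊤)).mp h2
  set y : ℕ → Bool := fun n => (σseq n).getD n false with hy
  have hy0 : y 0 = true := rfl
  have hpre : ∀ n, prefixStr y (n+1) = σseq n := by
    intro n
    induction n with
    | zero =>
        rw [prefixStr_succ]
        have : prefixStr y 0 = [] := by simp [prefixStr]
        rw [this, hy0, hσ0]
        rfl
    | succ n ih =>
        rw [prefixStr_succ, ih, hσsucc, hstep]
        simp only
        congr 1
        rw [hy]
        simp only
        rw [hσsucc, hstep]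
        simp only
        rw [show n + 1 = (σseq n).length from (hlen n).symm]
        rw [List.getD_eq_getElem?_getD, List.getElem?_concat_length]
        rfl
  refine ⟨y, hy0, ?_⟩
  intro i heq
  have hterm : ∀ (τ : List Bool), σ i <+: τ → (1:ℝ≥0∞) ≤ mm τ := by
    intro τ h
    have hfv : f τ i = 1 := by rw [hf]; simp only [if_pos h]
    calc (1:ℝ≥0∞) = f τ i := hfv.symm
      _ ≤ mm τ := ENNReal.le_tsum i
  cases hn : (σ i).length with
  | zero =>
      have hnil : σ i = [] := List.length_eq_zero_iff.mp hn
      have : (1:ℝ≥0∞) ≤ mm (σseq 0) := hterm _ (by rw [hnil]; exact List.nil_prefix)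
      exact absurd (hinv 0) (not_lt.mpr this)
  | succ n =>
      rw [hn] at heq
      rw [hpre n] at heq
      have : (1:ℝ≥0∞) ≤ mm (σseq n) := hterm _ (by rw [heq])
      exact absurd (hinv n) (not_lt.mpr this)



lemma primrec_enc0 : Primrec enc0 := by
  have h1 : Primrec (fun s : List Bool => s.flatMap (fun b => [b, b])) :=
    Primrec.list_flatMap Primrec.id
      (Primrec.list_cons.comp Primrec.snd
        (Primrec.list_cons.comp Primrec.snd (Primrec.const [])))
  exact Primrec.list_append.comp h1 (Primrec.const [true, false])

lemma primrec_dil : Primrec dil :=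
  Primrec.list_flatMap Primrec.id
    (Primrec.list_cons.comp Primrec.snd
      (Primrec.list_cons.comp (Primrec.const false) (Primrec.const [])))

/-- The self-delimiting decoding machine. -/
def C0 : List Bool →. List Bool := fun w =>
  Nat.rfindOpt (fun n => (Encodable.decode (α := List Bool) n).bind
    (fun s => if enc0 s = w then some s else none))

lemma partrec_C0 : Partrec C0 := by
  apply Partrec.rfindOpt
  apply Computable.option_bind
  · exact Computable.decode.comp Computable.snd
  · have hcond : PrimrecPred (fun q : (List Bool × ℕ) × List Bool => enc0 q.2 = q.1.1) :=
      Primrec.eq.comp (primrec_enc0.comp Primrec.snd) (Primrec.fst.comp Primrec.fst)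
    have : Primrec (fun q : (List Bool × ℕ) × List Bool =>
        if enc0 q.2 = q.1.1 then some q.2 else none) :=
      Primrec.ite hcond (Primrec.option_some.comp Primrec.snd) (Primrec.const none)
    exact this.to₂.to_comp

/-- Every member of `C0 w` witnesses that `w` codes it. -/
lemma C0_mem_eq {w a : List Bool} (h : a ∈ C0 w) : enc0 a = w := by
  obtain ⟨n, hn⟩ := Nat.rfindOpt_spec h
  simp only [Option.mem_def, Option.bind_eq_some_iff] at hn
  obtain ⟨s', hs', hif⟩ := hn
  by_cases hc : enc0 s' = w
  · rw [if_pos hc] at hif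
    obtain rfl := Option.some.inj hif
    exact hc
  · rw [if_neg hc] at hif; exact absurd hif (by simp)

lemma C0_mem (s : List Bool) : s ∈ C0 (enc0 s) := by
  have hdom : (C0 (enc0 s)).Dom := by
    rw [C0, Nat.rfindOpt_dom]
    refine ⟨Encodable.encode s, s, ?_⟩
    simp [Encodable.encodek]
  obtain ⟨a, ha⟩ := Part.dom_iff_mem.mp hdom
  have : a = s := enc0_prefix_eq ((C0_mem_eq ha) ▸ List.prefix_refl _)
  rwa [this] at ha

/-- The plain compressor machine. -/
def F0 : List Bool → List Bool := fun w =>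
  dil (((Encodable.decode (α := List Bool) w.length).getD []) ++ w)

lemma computable_F0 : Computable F0 := by
  have h1 : Primrec (fun w : List Bool => (Encodable.decode (α := List Bool) w.length)) :=
    Primrec.decode.comp Primrec.list_length
  have h2 : Primrec (fun w : List Bool =>
      ((Encodable.decode (α := List Bool) w.length).getD []) ++ w) :=
    Primrec.list_append.comp (Primrec.option_getD.comp h1 (Primrec.const [])) Primrec.id
  exact (primrec_dil.comp h2).to_comp


end S13aux

/-- There exists a real `β ∈ (0,1)` which is Chaitin `1/2`-random but not
`1/2`-`K`-random. -/
theorem stmt_13 (U : List Bool →. List Bool) (hU : Partrec U) (hUuniv : UnivSD U)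
    (T : List Bool →. List Bool) (hT : Partrec T) (hTuniv : UnivTM T) :
    ∃ β : ℝ, 0 < β ∧ β < 1 ∧ ∃ x : ℕ → Bool, β = realDigits x ∧
      (∃ c : ℝ, 0 ≤ c ∧ ∀ m : ℕ, 1 ≤ m →
        (Cpx U (prefixStr x m) : ℝ) ≥ m / 2 - c) ∧
      ¬ (∃ c' : ℝ, 0 ≤ c' ∧ ∀ m : ℕ, 1 ≤ m →
        (Cpx T (prefixStr x m) : ℝ) ≥ m / 2 - c') := by
  classical
  obtain ⟨hUsd, hUu⟩ := hUuniv
  -- every string is an output of U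
  have hC0sd : SelfDelim C0 := by
    intro p hp q hq hpq
    obtain ⟨a, ha⟩ := Part.dom_iff_mem.mp hp
    obtain ⟨b, hb⟩ := Part.dom_iff_mem.mp hq
    rw [← C0_mem_eq ha, ← C0_mem_eq hb] at hpq ⊢
    rw [enc0_prefix_eq hpq]
  obtain ⟨c0, hc0⟩ := hUu C0 partrec_C0 hC0sd
  have hrange : ∀ s : List Bool, ∃ w, s ∈ U w := by
    intro s
    have hdm : enc0 s ∈ dom C0 := Part.dom_iff_mem.mpr ⟨s, C0_mem s⟩
    obtain ⟨p, -, hUp⟩ := hc0 (enc0 s) hdm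
    exact ⟨p, by rw [hUp]; exact C0_mem s⟩
  -- the bad set of programs and their induced cylinders
  set outP : List Bool → List Bool :=
    fun p => if h : (U p).Dom then (U p).get h else [] with houtP
  set Bad : Set (List Bool) :=
    {p | (U p).Dom ∧ 2 * p.length + 4 < (outP p).length} with hBad
  set sig : Bad → List Bool := fun p =>
    (List.range (((outP p.1).length + 1)/2)).map
      (fun i => (outP p.1).getD (2*i) false) with hsig
  have hsig_len : ∀ p : Bad, (sig p).length = ((outP p.1).length + 1)/2 := by
    intro p; simp [hsig]
  have hsum : ∑' p : Bad, ((2:ℝ≥0∞)⁻¹) ^ (sig p).length ≤ 4⁻¹ := by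
    have hstep1 : ∑' p : Bad, ((2:ℝ≥0∞)⁻¹) ^ (sig p).length
        ≤ ∑' p : Bad, ((2:ℝ≥0∞)⁻¹) ^ (p.1.length + 3) := by
      apply ENNReal.tsum_le_tsum
      intro p
      apply pow_le_pow_right_of_le_one' (ENNReal.inv_le_one.mpr one_le_two)
      have hbd := p.2.2
      rw [hsig_len]
      omega
    have hstep2 : ∑' p : Bad, ((2:ℝ≥0∞)⁻¹) ^ (p.1.length + 3)
        = (2:ℝ≥0∞)⁻¹^3 * ∑' p : Bad, ((2:ℝ≥0∞)⁻¹) ^ (p.1.length) := by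
      rw [← ENNReal.tsum_mul_left]
      apply tsum_congr
      intro p
      rw [pow_add, mul_comm]
    have hstep3 : ∑' p : Bad, ((2:ℝ≥0∞)⁻¹) ^ (p.1.length)
        ≤ ∑' p : dom U, ((2:ℝ≥0∞)⁻¹) ^ ((p : List Bool).length) := by
      apply Summable.tsum_le_tsum_of_inj (fun p : Bad => (⟨p.1, p.2.1⟩ : dom U))
      · intro a b h
        simp only [Subtype.mk.injEq] at h
        exact Subtype.ext (congrArg (fun z : dom U => (z : List Bool)) h)
      · intro _ _; exact bot_le
      · intro p; exact le_rfl
      · exact ENNReal.summable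
      · exact ENNReal.summable
    have hkraft := kraft hUsd
    calc ∑' p : Bad, ((2:ℝ≥0∞)⁻¹) ^ (sig p).length
        ≤ (2:ℝ≥0∞)⁻¹^3 * ∑' p : Bad, ((2:ℝ≥0∞)⁻¹) ^ (p.1.length) := by
          rw [← hstep2]; exact hstep1
      _ ≤ (2:ℝ≥0∞)⁻¹^3 * 1 := by exact mul_le_mul_right (hstep3.trans hkraft) _
      _ ≤ 4⁻¹ := by
          have h8 : (2:ℝ≥0∞)⁻¹^3 = 8⁻¹ := by
            rw [← ENNReal.inv_pow]; norm_num
          rw [mul_one, h8]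
          exact ENNReal.inv_le_inv.mpr (by norm_num)
  obtain ⟨y, hy0, hyavoid⟩ := greedy sig hsum
  set x : ℕ → Bool := diluteFn y with hx
  have hx0 : x 0 = true := by simp [hx, diluteFn, hy0]
  have hx1 : x 1 = false := by simp [hx, diluteFn]
  -- summability of the digit series
  have hgeo : Summable (fun i : ℕ => (2:ℝ)⁻¹ ^ i) :=
    summable_geometric_of_lt_one (by norm_num) (by norm_num)
  have hsummable : Summable (fun i => (if x i then (1:ℝ) else 0) * (2:ℝ)⁻¹ ^ (i + 1)) := by
    apply Summable.of_nonneg_of_le (fun i => by positivity) (fun i => ?_)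
      (hgeo.mul_right (2:ℝ)⁻¹)
    by_cases h : x i <;> simp [h, pow_succ] <;> positivity
  refine ⟨realDigits x, ?_, ?_, x, rfl, ⟨2, by norm_num, ?_⟩, ?_⟩
  · -- 0 < β
    have hterm : (if x 0 then (1:ℝ) else 0) * (2:ℝ)⁻¹ ^ (0 + 1) = 2⁻¹ := by
      rw [hx0]; norm_num
    have := Summable.le_tsum hsummable 0 (fun j _ => by positivity)
    rw [hterm] at this
    rw [realDigits]
    linarith
  · -- β < 1
    have hsplit := Summable.sum_add_tsum_nat_add 2 hsummable
    have htail : ∑' i : ℕ, (if x (i + 2) then (1:ℝ) else 0) * (2:ℝ)⁻¹ ^ (i + 2 + 1)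
        ≤ ∑' i : ℕ, (2:ℝ)⁻¹ ^ i * (2:ℝ)⁻¹ ^ 3 := by
      have htsum : Summable (fun i : ℕ =>
          (if x (i + 2) then (1:ℝ) else 0) * (2:ℝ)⁻¹ ^ (i + 2 + 1)) :=
        (summable_nat_add_iff
          (f := fun i => (if x i then (1:ℝ) else 0) * (2:ℝ)⁻¹ ^ (i + 1)) 2).mpr hsummable
      apply Summable.tsum_le_tsum _ htsum (hgeo.mul_right _)
      intro i
      have : (2:ℝ)⁻¹ ^ (i + 2 + 1) = (2:ℝ)⁻¹ ^ i * (2:ℝ)⁻¹ ^ 3 := by ring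
      by_cases h : x (i + 2) <;> simp [h, this] <;> positivity
    have hgeosum : ∑' i : ℕ, (2:ℝ)⁻¹ ^ i * (2:ℝ)⁻¹ ^ 3 = 4⁻¹ := by
      rw [tsum_mul_right]
      have h2 : ∑' i : ℕ, (2:ℝ)⁻¹ ^ i = 2 := by
        have := tsum_geometric_two
        simpa [one_div] using this
      rw [h2]; norm_num
    have hfin : ∑ i ∈ Finset.range 2, (if x i then (1:ℝ) else 0) * (2:ℝ)⁻¹ ^ (i + 1)
        = 2⁻¹ := by
      rw [Finset.sum_range_succ, Finset.sum_range_succ, Finset.sum_range_zero]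
      rw [hx0, hx1]
      norm_num
    rw [realDigits, ← hsplit, hfin]
    rw [hgeosum] at htail
    linarith
  · -- Chaitin 1/2-randomness
    intro m hm
    have hne : {n : ℕ | ∃ w : List Bool, w.length = n ∧ prefixStr x m ∈ U w}.Nonempty := by
      obtain ⟨w, hw⟩ := hrange (prefixStr x m)
      exact ⟨w.length, w, rfl, hw⟩
    have hmem := Nat.sInf_mem hne
    obtain ⟨w, hwlen, hwmem⟩ := hmem
    show ((Cpx U (prefixStr x m) : ℝ)) ≥ m / 2 - 2
    rw [Cpx, ← hwlen]
    by_contra hlt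
    push_neg at hlt
    have hnat : 2 * w.length + 4 < m := by
      have h4 : (2 * w.length + 4 : ℝ) < m := by linarith
      exact_mod_cast h4
    have hdomw : (U w).Dom := Part.dom_iff_mem.mpr ⟨_, hwmem⟩
    have hout : outP w = prefixStr x m := by
      rw [houtP]
      simp only
      rw [dif_pos hdomw]
      exact Part.get_eq_of_mem hwmem hdomw
    have hwBad : w ∈ Bad := by
      refine ⟨hdomw, ?_⟩
      rw [hout, prefixStr_length]
      exact hnat
    apply hyavoid ⟨w, hwBad⟩
    rw [hsig_len ⟨w, hwBad⟩]
    have houtlen : (outP w).length = m := by rw [hout, prefixStr_length]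
    rw [hsig]
    simp only
    rw [houtlen]
    rw [prefixStr]
    apply List.map_congr_left
    intro i hi
    rw [List.mem_range] at hi
    have h2i : 2 * i < m := by omega
    rw [hout, getD_prefixStr x h2i]
    show y i = x (2 * i)
    simp [hx, diluteFn, Nat.mul_div_cancel_left, Nat.mul_mod_right]
  · -- failure of 1/2-K-randomness
    rintro ⟨c', hc'0, hc'⟩
    obtain ⟨cT, hcT⟩ := hTuniv (F0 : List Bool →. List Bool) computable_F0
    obtain ⟨t, ht⟩ : ∃ t : ℕ, t = cT + ⌈c'⌉₊ + 1 := ⟨_, rfl⟩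
    set s := prefixStr y t with hs
    set l := Encodable.encode s with hl
    set w := (List.range l).map (fun i => y (t + i)) with hw
    have hwlen : w.length = l := by simp [hw]
    have hFw : F0 w = prefixStr x (2 * (t + l)) := by
      rw [F0, hwlen, hl, Encodable.encodek]
      have happ : (Option.some s).getD [] ++ w = prefixStr y (t + l) := by
        show s ++ w = prefixStr y (t + l)
        rw [hs, hw, prefixStr, prefixStr, List.range_add, List.map_append, List.map_map]
        rfl
      rw [happ, hx, dil_prefix]
    have hwdom : w ∈ dom (F0 : List Bool →. List Bool) := by
      show ((F0 : List Bool →. List Bool) w).Dom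
      rw [PFun.coe_val]
      trivial
    obtain ⟨p, hpl, hTp⟩ := hcT w hwdom
    have hmemT : prefixStr x (2 * (t + l)) ∈ T p := by
      rw [hTp, PFun.coe_val, hFw]
      exact Part.mem_some _
    have hCle : Cpx T (prefixStr x (2 * (t + l))) ≤ p.length :=
      Nat.sInf_le ⟨p, rfl, hmemT⟩
    have hm1 : 1 ≤ 2 * (t + l) := by omega
    have hge := hc' (2 * (t + l)) hm1
    have hhalf : (((2 * (t + l) : ℕ)) : ℝ) / 2 = (t : ℝ) + l := by push_cast; ring
    rw [hhalf] at hge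
    have h1 : ((Cpx T (prefixStr x (2 * (t + l))) : ℕ) : ℝ) ≤ (p.length : ℝ) := by
      exact_mod_cast hCle
    have h2 : (p.length : ℝ) ≤ (l : ℝ) + cT := by
      have : p.length ≤ l + cT := by rw [← hwlen]; exact hpl
      exact_mod_cast this
    have hceil : (c' : ℝ) ≤ (⌈c'⌉₊ : ℕ) := Nat.le_ceil c'
    have htR : (t : ℝ) = (cT : ℝ) + (⌈c'⌉₊ : ℕ) + 1 := by rw [ht]; push_cast; ring
    linarith
end

section
/- Let s ≥ 1 be a computable real, U a universal self-delimiting Turing machine, T a universal Turing machine, and α ∈ (0,1) a real with binary digit sequence x. Then the following are equivalent: (1) liminf_{n→∞} K_T(x_0 ⋯ x_{n−1})/n ≥ 1/s; (2) for every computable real t > s there exists a constant c ≥ 0 such that K_T(x_0 ⋯ x_{m−1}) ≥ m/t − c for all m ≥ 1; (3) for every computable real t > s there exists a constant c ≥ 0 such that H_U(x_0 ⋯ x_{m−1}) ≥ m/t − c for all m ≥ 1. -/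
open scoped ENNReal

namespace Stmt14Aux




/-- value of a little-endian bit list -/
def ofBits (l : List Bool) : ℕ := l.foldr (fun b m => 2 * m + cond b 1 0) 0

@[simp] lemma ofBits_nil : ofBits [] = 0 := rfl
@[simp] lemma ofBits_cons (b : Bool) (l : List Bool) :
    ofBits (b :: l) = 2 * ofBits l + cond b 1 0 := rfl

lemma ofBits_append_replicate_false (l : List Bool) (s : ℕ) :
    ofBits (l ++ List.replicate s false) = ofBits l := by
  induction l with
  | nil =>
    simp only [List.nil_append, ofBits_nil]
    induction s with
    | zero => simp [ofBits]
    | succ n ih => simpa [List.replicate_succ, ofBits] using ih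
  | cons b t ih => simp [ofBits_cons, ih]

/-- little-endian bits of a natural number -/
def natBits : ℕ → List Bool
  | 0 => []
  | (n+1) => (((n+1) % 2) == 1) :: natBits ((n+1) / 2)
decreasing_by exact Nat.div_lt_self (Nat.succ_pos n) one_lt_two

lemma ofBits_natBits (n : ℕ) : ofBits (natBits n) = n := by
  induction n using Nat.strong_induction_on with
  | _ n ih =>
    match n with
    | 0 => simp [natBits]
    | (m+1) =>
      rw [natBits, ofBits_cons, ih ((m+1)/2) (Nat.div_lt_self (Nat.succ_pos m) one_lt_two)]
      have h2 : (m+1) % 2 < 2 := Nat.mod_lt _ (by norm_num)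
      have := Nat.div_add_mod (m+1) 2
      interval_cases h : (m+1) % 2 <;> simp_all <;> omega

lemma natBits_length_le : ∀ K n : ℕ, n < 2 ^ K → (natBits n).length ≤ K := by
  intro K
  induction K with
  | zero => intro n hn; interval_cases n; simp [natBits]
  | succ K ih =>
    intro n hn
    match n with
    | 0 => simp [natBits]
    | (m+1) =>
      rw [natBits]
      simp only [List.length_cons]
      have : (m+1)/2 < 2 ^ K := by
        rw [Nat.div_lt_iff_lt_mul (by norm_num)]
        calc m + 1 < 2 ^ (K+1) := hn
        _ = 2 ^ K * 2 := by ring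
      exact Nat.succ_le_succ (ih _ this)

/-- `natBits` padded with zeros to length `k` -/
def padBits (k j : ℕ) : List Bool := natBits j ++ List.replicate (k - (natBits j).length) false

lemma padBits_length {k j : ℕ} (h : j < 2 ^ k) : (padBits k j).length = k := by
  have := natBits_length_le k j h
  simp [padBits]; omega

@[simp] lemma ofBits_padBits (k j : ℕ) : ofBits (padBits k j) = j := by
  rw [padBits, ofBits_append_replicate_false, ofBits_natBits]




/-- state of the header parser -/
abbrev St : Type := ℕ ⊕ ((ℕ × List Bool) ⊕ (ℕ × List Bool))

/-- step function of the header parser -/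
def step (k : ℕ) (s : St) (b : Bool) : St :=
  match s with
  | .inl d => bif b then .inl (d+1) else .inr (.inl (d, []))
  | .inr (.inl du) =>
      if (du.2 ++ [b]).length = k then .inr (.inr (2 ^ k * du.1 + ofBits (du.2 ++ [b]), []))
      else .inr (.inl (du.1, du.2 ++ [b]))
  | .inr (.inr Lp) => .inr (.inr (Lp.1, Lp.2 ++ [b]))

def decodeK (k : ℕ) (q : List Bool) : Option (List Bool) :=
  match q.foldl (step k) (.inl 0) with
  | .inr (.inr Lp) => if Lp.2.length = Lp.1 then some Lp.2 else none
  | _ => none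


def encodeK (k : ℕ) (r : List Bool) : List Bool :=
  List.replicate (r.length / 2 ^ k) true ++ false :: (padBits k (r.length % 2 ^ k) ++ r)

variable {k : ℕ}

lemma foldA (n : ℕ) (d : ℕ) (q : List Bool) :
    (List.replicate n true ++ q).foldl (step k) (.inl d) = q.foldl (step k) (.inl (d + n)) := by
  induction n generalizing d with
  | zero => simp
  | succ n ih =>
    rw [List.replicate_succ, List.cons_append, List.foldl_cons]
    show (List.replicate n true ++ q).foldl (step k) (.inl (d+1)) = _
    rw [ih]; ring_nf

lemma foldC (q : List Bool) (L : ℕ) (pay : List Bool) :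
    q.foldl (step k) (.inr (.inr (L, pay))) = .inr (.inr (L, pay ++ q)) := by
  induction q generalizing pay with
  | nil => simp
  | cons b q ih => rw [List.foldl_cons]; show q.foldl (step k) (.inr (.inr (L, pay ++ [b]))) = _
                   rw [ih]; simp

lemma foldB (v : List Bool) (hv : v ≠ []) (u : List Bool) (d : ℕ)
    (hlen : u.length + v.length = k) (q : List Bool) :
    (v ++ q).foldl (step k) (.inr (.inl (d, u)))
      = q.foldl (step k) (.inr (.inr (2 ^ k * d + ofBits (u ++ v), []))) := by
  induction v generalizing u with
  | nil => exact absurd rfl hv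
  | cons b v ih =>
    rw [List.cons_append, List.foldl_cons]
    rcases List.eq_nil_or_concat' v with rfl | ⟨b', v', rfl⟩
    · have hk : (u ++ [b]).length = k := by simpa using hlen
      rw [show step k (.inr (.inl (d, u))) b
          = .inr (.inr (2 ^ k * d + ofBits (u ++ [b]), [])) from by
        simp only [step]; rw [if_pos hk], List.nil_append]
    · have hne : (u ++ [b]).length ≠ k := by
        simp only [List.length_append, List.length_cons, List.length_nil] at hlen ⊢
        omega
      rw [show step k (.inr (.inl (d, u))) b = .inr (.inl (d, u ++ [b])) from by
        simp only [step]; rw [if_neg hne]]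
      rw [ih (by simp) (u ++ [b]) (by
        simp only [List.length_append, List.length_cons, List.length_nil] at hlen ⊢
        omega)]
      simp

lemma charB (q : List Bool) (u : List Bool) (d L : ℕ) (pay : List Bool) (hu : u.length < k)
    (h : q.foldl (step k) (.inr (.inl (d, u))) = .inr (.inr (L, pay))) :
    ∃ v, q = v ++ pay ∧ (u ++ v).length = k ∧ L = 2 ^ k * d + ofBits (u ++ v) := by
  induction q generalizing u with
  | nil => simp at h
  | cons b q ih =>
    rw [List.foldl_cons] at h
    by_cases hk : (u ++ [b]).length = k
    · rw [show step k (.inr (.inl (d, u))) b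
          = .inr (.inr (2 ^ k * d + ofBits (u ++ [b]), [])) from by
        simp only [step]; rw [if_pos hk]] at h
      rw [foldC] at h
      obtain ⟨hL, hpay⟩ : 2 ^ k * d + ofBits (u ++ [b]) = L ∧ q = pay := by
        simpa using h
      exact ⟨[b], by simp [hpay], hk, hL.symm⟩
    · rw [show step k (.inr (.inl (d, u))) b = .inr (.inl (d, u ++ [b])) from by
          simp only [step]; rw [if_neg hk]] at h
      have hu' : (u ++ [b]).length < k := by
        simp only [List.length_append, List.length_cons, List.length_nil] at hk ⊢
        omega
      obtain ⟨v, hq, hlen, hL⟩ := ih (u ++ [b]) hu' h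
      exact ⟨b :: v, by simp [hq], by simpa using hlen, by simpa using hL⟩

lemma charA (hk : 1 ≤ k) (q : List Bool) (d L : ℕ) (pay : List Bool)
    (h : q.foldl (step k) (.inl d) = .inr (.inr (L, pay))) :
    ∃ n u, q = List.replicate n true ++ false :: (u ++ pay) ∧ u.length = k ∧
      L = 2 ^ k * (d + n) + ofBits u := by
  induction q generalizing d with
  | nil => simp at h
  | cons b q ih =>
    rw [List.foldl_cons] at h
    cases b with
    | true =>
      rw [show step k (.inl d) true = .inl (d+1) from rfl] at h
      obtain ⟨n, u, hq, hul, hL⟩ := ih (d+1) h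
      exact ⟨n+1, u, by simp [hq, List.replicate_succ], hul, by rw [hL]; ring_nf⟩
    | false =>
      rw [show step k (.inl d) false = .inr (.inl (d, [])) from rfl] at h
      obtain ⟨v, hq, hlen, hL⟩ := charB q [] d L pay (by simp; omega) h
      exact ⟨0, v, by simp [hq], by simpa using hlen, by simpa using hL⟩

lemma decodeK_eq_some (hk : 1 ≤ k) {q r : List Bool} (h : decodeK k q = some r) :
    ∃ n u, q = List.replicate n true ++ false :: (u ++ r) ∧ u.length = k ∧
      r.length = 2 ^ k * n + ofBits u := by
  unfold decodeK at h
  rcases hfold : q.foldl (step k) (.inl 0) with _ | Lp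
  · rw [hfold] at h; simp at h
  rcases Lp with Lp | ⟨L, pay⟩
  · rw [hfold] at h; simp at h
  rw [hfold] at h
  simp only at h
  split at h
  · next hlen =>
    obtain rfl : pay = r := by simpa using h
    obtain ⟨n, u, hq, hul, hL⟩ := charA hk q 0 L pay hfold
    rw [Nat.zero_add] at hL
    exact ⟨n, u, hq, hul, by omega⟩
  · simp at h


lemma encodeK_length (k : ℕ) (r : List Bool) :
    (encodeK k r).length = r.length / 2 ^ k + 1 + k + r.length := by
  have hmod : r.length % 2 ^ k < 2 ^ k := Nat.mod_lt _ (Nat.pow_pos (by norm_num))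
  simp [encodeK, padBits_length hmod]
  ring

lemma decodeK_encodeK (hk : 1 ≤ k) (r : List Bool) : decodeK k (encodeK k r) = some r := by
  have hmod : r.length % 2 ^ k < 2 ^ k := Nat.mod_lt _ (Nat.pow_pos (by norm_num))
  have hpadlen : (padBits k (r.length % 2 ^ k)).length = k := padBits_length hmod
  have hpadne : padBits k (r.length % 2 ^ k) ≠ [] := by
    intro h; rw [h] at hpadlen; simp at hpadlen; omega
  unfold decodeK encodeK
  rw [foldA, List.foldl_cons]
  rw [show step k (.inl (0 + r.length / 2 ^ k)) false
      = .inr (.inl (0 + r.length / 2 ^ k, [])) from rfl]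
  rw [foldB (padBits k (r.length % 2 ^ k)) hpadne [] _ (by simpa using hpadlen)]
  rw [foldC]
  simp only [List.nil_append, ofBits_padBits, Nat.zero_add]
  exact if_pos (Nat.div_add_mod r.length (2 ^ k)).symm

lemma replicate_prefix_eq : ∀ (n1 n2 : ℕ) (a1 a2 : List Bool),
    (List.replicate n1 true ++ false :: a1) <+: (List.replicate n2 true ++ false :: a2) →
    n1 = n2 ∧ a1 <+: a2 := by
  intro n1
  induction n1 with
  | zero =>
    intro n2 a1 a2 h
    cases n2 with
    | zero => simpa [List.cons_prefix_cons] using h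
    | succ m =>
      rw [List.replicate_zero, List.nil_append, List.replicate_succ, List.cons_append,
        List.cons_prefix_cons] at h
      exact absurd h.1 (by simp)
  | succ m ih =>
    intro n2 a1 a2 h
    cases n2 with
    | zero =>
      rw [List.replicate_zero, List.nil_append, List.replicate_succ, List.cons_append,
        List.cons_prefix_cons] at h
      exact absurd h.1 (by simp)
    | succ m2 =>
      rw [List.replicate_succ, List.replicate_succ, List.cons_append, List.cons_append,
        List.cons_prefix_cons] at h
      obtain ⟨heq, hpre⟩ := ih m2 a1 a2 h.2
      exact ⟨by omega, hpre⟩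

/-- the decodable strings form a prefix-free set -/
lemma decodeK_prefixFree (hk : 1 ≤ k) {q1 q2 r1 r2 : List Bool}
    (h1 : decodeK k q1 = some r1) (h2 : decodeK k q2 = some r2) (hpre : q1 <+: q2) :
    q1 = q2 := by
  obtain ⟨n1, u1, hq1, hu1, hl1⟩ := decodeK_eq_some hk h1
  obtain ⟨n2, u2, hq2, hu2, hl2⟩ := decodeK_eq_some hk h2
  rw [hq1, hq2] at hpre
  obtain ⟨hn, hpre'⟩ := replicate_prefix_eq _ _ _ _ hpre
  subst hn
  -- u1 = u2
  obtain ⟨tl, htl⟩ := hpre'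
  have hu12 : u1 = u2 := by
    have e1 : (u1 ++ (r1 ++ tl)).take k = u1 := by
      rw [← hu1]; exact List.take_left (l₁ := u1) (l₂ := r1 ++ tl)
    have e2 : (u2 ++ r2).take k = u2 := by
      rw [← hu2]; exact List.take_left (l₁ := u2) (l₂ := r2)
    rw [← e1, ← e2, ← List.append_assoc, htl]
  subst hu12
  have hr : r1.length = r2.length := by rw [hl1, hl2]
  rw [hq1, hq2]
  exact hpre.eq_of_length (by simp [hr])

lemma primrec_ofBits : Primrec ofBits := by
  have h : Primrec₂ (fun (_ : List Bool) (p : Bool × ℕ) => 2 * p.2 + cond p.1 1 0) :=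
    Primrec.nat_add.comp (Primrec.nat_mul.comp (Primrec.const 2) (Primrec.snd.comp Primrec.snd))
      (Primrec.cond (Primrec.fst.comp Primrec.snd) (Primrec.const 1) (Primrec.const 0))
  exact (Primrec.list_foldr Primrec.id (Primrec.const 0) h).of_eq (fun l => rfl)

lemma primrec_step (k : ℕ) : Primrec₂ (step k) := by
  have hg : Primrec₂ fun (p : St × Bool) (d : ℕ) =>
      (bif p.2 then (Sum.inl (d+1) : St) else .inr (.inl (d, ([] : List Bool)))) :=
    Primrec.cond (Primrec.snd.comp Primrec.fst)
      (Primrec.sumInl.comp (Primrec.succ.comp Primrec.snd))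
      (Primrec.sumInr.comp (Primrec.sumInl.comp (Primrec.snd.pair (Primrec.const []))))
  have hb : Primrec fun (r : ((St × Bool) × ((ℕ × List Bool) ⊕ (ℕ × List Bool))) × ℕ × List Bool)
      => r.1.1.2 := Primrec.snd.comp (Primrec.fst.comp Primrec.fst)
  have hu' : Primrec fun (r : ((St × Bool) × ((ℕ × List Bool) ⊕ (ℕ × List Bool))) × ℕ × List Bool)
      => r.2.2 ++ [r.1.1.2] :=
    Primrec.list_append.comp (Primrec.snd.comp Primrec.snd)
      (Primrec.list_cons.comp hb (Primrec.const []))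
  have hA : Primrec₂ fun (w : (St × Bool) × ((ℕ × List Bool) ⊕ (ℕ × List Bool)))
      (du : ℕ × List Bool) =>
      (if (du.2 ++ [w.1.2]).length = k
        then (Sum.inr (Sum.inr (2 ^ k * du.1 + ofBits (du.2 ++ [w.1.2]), ([] : List Bool))) : St)
        else Sum.inr (Sum.inl (du.1, du.2 ++ [w.1.2]))) :=
    Primrec.ite (Primrec.eq.comp (Primrec.list_length.comp hu') (Primrec.const k))
      (Primrec.sumInr.comp (Primrec.sumInr.comp
        ((Primrec.nat_add.comp
          (Primrec.nat_mul.comp (Primrec.const (2 ^ k)) (Primrec.fst.comp Primrec.snd))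
          (primrec_ofBits.comp hu')).pair (Primrec.const []))))
      (Primrec.sumInr.comp (Primrec.sumInl.comp ((Primrec.fst.comp Primrec.snd).pair hu')))
  have hB : Primrec₂ fun (w : (St × Bool) × ((ℕ × List Bool) ⊕ (ℕ × List Bool)))
      (Lp : ℕ × List Bool) => (Sum.inr (Sum.inr (Lp.1, Lp.2 ++ [w.1.2])) : St) :=
    Primrec.sumInr.comp (Primrec.sumInr.comp ((Primrec.fst.comp Primrec.snd).pair
      (Primrec.list_append.comp (Primrec.snd.comp Primrec.snd)
        (Primrec.list_cons.comp (Primrec.snd.comp (Primrec.fst.comp Primrec.fst))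
          (Primrec.const [])))))
  have hh : Primrec₂ fun (p : St × Bool) (z : (ℕ × List Bool) ⊕ (ℕ × List Bool)) =>
      (Sum.casesOn z
        (fun du => if (du.2 ++ [p.2]).length = k
          then (Sum.inr (Sum.inr (2 ^ k * du.1 + ofBits (du.2 ++ [p.2]), ([] : List Bool))) : St)
          else Sum.inr (Sum.inl (du.1, du.2 ++ [p.2])))
        (fun Lp => Sum.inr (Sum.inr (Lp.1, Lp.2 ++ [p.2]))) : St) :=
    Primrec.sumCasesOn Primrec.snd hA hB
  refine (Primrec.sumCasesOn Primrec.fst hg hh).of_eq ?_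
  rintro ⟨(d | (du | Lp)), b⟩ <;> rfl

lemma primrec_foldSt (k : ℕ) : Primrec fun q : List Bool => q.foldl (step k) (.inl 0) := by
  have hstep' : Primrec₂ fun (_ : List Bool) (p : St × Bool) => step k p.1 p.2 :=
    (primrec_step k).comp (Primrec.fst.comp Primrec.snd) (Primrec.snd.comp Primrec.snd)
  exact (Primrec.list_foldl Primrec.id (Primrec.const (Sum.inl 0 : St)) hstep').of_eq
    (fun q => rfl)

lemma primrec_decodeK (k : ℕ) : Primrec (decodeK k) := by
  have hLp : Primrec₂ fun (w : List Bool × ((ℕ × List Bool) ⊕ (ℕ × List Bool)))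
      (Lp : ℕ × List Bool) =>
      (if Lp.2.length = Lp.1 then some Lp.2 else none : Option (List Bool)) :=
    Primrec.ite (Primrec.eq.comp (Primrec.list_length.comp (Primrec.snd.comp Primrec.snd))
        (Primrec.fst.comp Primrec.snd))
      (Primrec.option_some.comp (Primrec.snd.comp Primrec.snd)) (Primrec.const none)
  have hinner : Primrec₂ fun (q : List Bool) (z : (ℕ × List Bool) ⊕ (ℕ × List Bool)) =>
      (Sum.casesOn z (fun _ => none)
        (fun Lp => if Lp.2.length = Lp.1 then some Lp.2 else none) : Option (List Bool)) :=
    Primrec.sumCasesOn Primrec.snd (Primrec.const none) hLp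
  refine (Primrec.sumCasesOn (primrec_foldSt k) ((Primrec.const none).to₂) hinner).of_eq ?_
  intro q
  unfold decodeK
  rcases q.foldl (step k) (.inl 0) with _ | (_ | _) <;> rfl


variable {T : List Bool →. List Bool}

def CM (k : ℕ) (T : List Bool →. List Bool) : List Bool →. List Bool :=
  fun q => (decodeK k q : Part (List Bool)).bind T

lemma CM_partrec (k : ℕ) (hT : Partrec T) : Partrec (CM k T) :=
  (Computable.ofOption (primrec_decodeK k).to_comp).bind (hT.comp Computable.snd)

lemma mem_CM {k : ℕ} {q y : List Bool} :
    y ∈ CM k T q ↔ ∃ r, decodeK k q = some r ∧ y ∈ T r := by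
  simp [CM, Part.mem_bind_iff, Part.mem_ofOption, Option.mem_def, eq_comm]
  rcases decodeK k q with _ | r <;> simp
  · exact fun h => h.1.1
  · exact Iff.of_eq (congrArg (y ∈ ·) (Part.bind_some r T))

lemma CM_encodeK (hk : 1 ≤ k) (r : List Bool) : CM k T (encodeK k r) = T r := by
  rw [CM, decodeK_encodeK hk]
  simp
  exact Part.bind_some _ _

lemma CM_selfDelim (hk : 1 ≤ k) (T : List Bool →. List Bool) : SelfDelim (CM k T) := by
  intro p hp q hq hpre
  obtain ⟨y1, hy1⟩ := Part.dom_iff_mem.1 hp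
  obtain ⟨y2, hy2⟩ := Part.dom_iff_mem.1 hq
  obtain ⟨r1, hd1, -⟩ := mem_CM.1 hy1
  obtain ⟨r2, hd2, -⟩ := mem_CM.1 hy2
  exact decodeK_prefixFree hk hd1 hd2 hpre

def constM (y : List Bool) : List Bool →. List Bool :=
  fun p => Part.ofOption (if p = [] then some y else none)

lemma constM_partrec (y : List Bool) : Partrec (constM y) :=
  Computable.ofOption ((Primrec.ite (Primrec.eq.comp Primrec.id (Primrec.const ([] : List Bool)))
    (Primrec.const (some y)) (Primrec.const none)).to_comp)

lemma mem_dom_constM (y : List Bool) : [] ∈ dom (constM y) := by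
  show (constM y []).Dom
  simp [constM]

lemma constM_apply (y : List Bool) : constM y [] = Part.some y := by
  simp [constM, Part.ofOption]

lemma dom_constM {y p : List Bool} (hp : p ∈ dom (constM y)) : p = [] := by
  by_contra h
  simp only [dom, Set.mem_setOf_eq, constM, if_neg h] at hp
  exact (Part.not_none_dom hp : False)

lemma constM_selfDelim (y : List Bool) : SelfDelim (constM y) := by
  intro p hp q hq _
  rw [dom_constM hp, dom_constM hq]

lemma cpx_le {f : List Bool →. List Bool} {y w : List Bool} (h : y ∈ f w) :
    Cpx f y ≤ w.length :=
  Nat.sInf_le ⟨w, rfl, h⟩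

lemma cpx_spec {f : List Bool →. List Bool} {y : List Bool} (h : ∃ p, y ∈ f p) :
    ∃ w, w.length = Cpx f y ∧ y ∈ f w := by
  obtain ⟨p, hp⟩ := h
  exact Nat.sInf_mem (s := {n | ∃ w : List Bool, w.length = n ∧ y ∈ f w}) ⟨p.length, p, rfl, hp⟩

lemma exists_prog_univTM (hTuniv : UnivTM T) (y : List Bool) : ∃ p, y ∈ T p := by
  obtain ⟨c, h⟩ := hTuniv (constM y) (constM_partrec y)
  obtain ⟨p, -, hp⟩ := h [] (mem_dom_constM y)
  exact ⟨p, by rw [hp, constM_apply]; exact Part.mem_some y⟩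

lemma exists_prog_univSD {U : List Bool →. List Bool} (hUuniv : UnivSD U) (y : List Bool) :
    ∃ p, y ∈ U p := by
  obtain ⟨c, h⟩ := hUuniv.2 (constM y) (constM_partrec y) (constM_selfDelim y)
  obtain ⟨p, -, hp⟩ := h [] (mem_dom_constM y)
  exact ⟨p, by rw [hp, constM_apply]; exact Part.mem_some y⟩

lemma cpxT_le_length (hTuniv : UnivTM T) : ∃ c : ℕ, ∀ y, Cpx T y ≤ y.length + c := by
  obtain ⟨c, h⟩ := hTuniv (fun l => Part.some l) Computable.id
  refine ⟨c, fun y => ?_⟩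
  obtain ⟨p, hlen, hp⟩ := h y trivial
  have hy : y ∈ T p := by rw [hp]; exact Part.mem_some y
  exact le_trans (cpx_le hy) hlen

lemma cpxT_le_cpxU {U : List Bool →. List Bool} (hTuniv : UnivTM T) (hU : Partrec U)
    (hUuniv : UnivSD U) : ∃ c : ℕ, ∀ y, Cpx T y ≤ Cpx U y + c := by
  obtain ⟨c, h⟩ := hTuniv U hU
  refine ⟨c, fun y => ?_⟩
  obtain ⟨w, hwlen, hw⟩ := cpx_spec (exists_prog_univSD hUuniv y)
  obtain ⟨p, hlen, hp⟩ := h w (Part.dom_iff_mem.2 ⟨y, hw⟩)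
  have hy : y ∈ T p := by rw [hp]; exact hw
  calc Cpx T y ≤ p.length := cpx_le hy
    _ ≤ w.length + c := hlen
    _ = Cpx U y + c := by rw [hwlen]

lemma cpxU_le {U : List Bool →. List Bool} (hUuniv : UnivSD U) (hT : Partrec T)
    (hTuniv : UnivTM T) (k : ℕ) (hk : 1 ≤ k) :
    ∃ c : ℕ, ∀ y, Cpx U y ≤ Cpx T y + Cpx T y / 2 ^ k + 1 + k + c := by
  obtain ⟨c, h⟩ := hUuniv.2 (CM k T) (CM_partrec k hT) (CM_selfDelim hk T)
  refine ⟨c, fun y => ?_⟩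
  obtain ⟨w, hwlen, hw⟩ := cpx_spec (exists_prog_univTM hTuniv y)
  have hdom : encodeK k w ∈ dom (CM k T) := by
    show (CM k T (encodeK k w)).Dom
    rw [CM_encodeK hk]
    exact Part.dom_iff_mem.2 ⟨y, hw⟩
  obtain ⟨p, hlen, hp⟩ := h _ hdom
  have hy : y ∈ U p := by rw [hp, CM_encodeK hk]; exact hw
  calc Cpx U y ≤ p.length := cpx_le hy
    _ ≤ (encodeK k w).length + c := hlen
    _ = w.length / 2 ^ k + 1 + k + w.length + c := by rw [encodeK_length]
    _ = Cpx T y + Cpx T y / 2 ^ k + 1 + k + c := by rw [hwlen]; ring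

lemma computableReal_rat (q : ℚ) : ComputableReal (q : ℝ) :=
  ⟨fun _ => q, Computable.const q, fun n => by
    simp only [sub_self, abs_zero]
    positivity⟩


end Stmt14Aux

/-- Characterisations of asymptotic `1/s`-randomness: the lower asymptotic
plain complexity is at least `1/s` iff the real is `1/t`-`K`-random for every
computable `t > s` iff it is Chaitin `1/t`-random for every computable `t > s`. -/
theorem stmt_14 (s : ℝ) (hs : ComputableReal s) (hs1 : 1 ≤ s)
    (U : List Bool →. List Bool) (hU : Partrec U) (hUuniv : UnivSD U)
    (T : List Bool →. List Bool) (hT : Partrec T) (hTuniv : UnivTM T)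
    (α : ℝ) (hα0 : 0 < α) (hα1 : α < 1) (x : ℕ → Bool) (hx : α = realDigits x) :
    ((Filter.liminf (fun n : ℕ => (Cpx T (prefixStr x n) : ℝ) / n) Filter.atTop ≥ 1 / s)
      ↔ (∀ t : ℝ, ComputableReal t → s < t → ∃ c : ℝ, 0 ≤ c ∧ ∀ m : ℕ, 1 ≤ m →
          (Cpx T (prefixStr x m) : ℝ) ≥ m / t - c)) ∧
    ((∀ t : ℝ, ComputableReal t → s < t → ∃ c : ℝ, 0 ≤ c ∧ ∀ m : ℕ, 1 ≤ m →
          (Cpx T (prefixStr x m) : ℝ) ≥ m / t - c)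
      ↔ (∀ t : ℝ, ComputableReal t → s < t → ∃ c : ℝ, 0 ≤ c ∧ ∀ m : ℕ, 1 ≤ m →
          (Cpx U (prefixStr x m) : ℝ) ≥ m / t - c)) := by
  classical
  obtain ⟨c1, hc1⟩ := Stmt14Aux.cpxT_le_length hTuniv
  have hlen : ∀ m : ℕ, (prefixStr x m).length = m := fun m => by simp [prefixStr]
  have hKle : ∀ m : ℕ, Cpx T (prefixStr x m) ≤ m + c1 := fun m => by
    simpa [hlen m] using hc1 (prefixStr x m)
  set u : ℕ → ℝ := fun n : ℕ => (Cpx T (prefixStr x n) : ℝ) / n with hu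
  have hs0 : (0:ℝ) < s := lt_of_lt_of_le one_pos hs1
  have hu0 : ∀ n, 0 ≤ u n := fun n => div_nonneg (Nat.cast_nonneg _) (Nat.cast_nonneg _)
  have hubd : ∀ n, u n ≤ 1 + c1 := by
    intro n
    rcases Nat.eq_zero_or_pos n with rfl | hn
    · rw [hu]
      simp
      positivity
    · have hn' : (0:ℝ) < n := by exact_mod_cast hn
      rw [hu]
      show (Cpx T (prefixStr x n) : ℝ) / n ≤ 1 + c1
      rw [div_le_iff₀ hn']
      have h2 : (Cpx T (prefixStr x n) : ℝ) ≤ n + c1 := by exact_mod_cast hKle n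
      have h3 : (1:ℝ) ≤ n := by exact_mod_cast hn
      have h4 : (0:ℝ) ≤ c1 := Nat.cast_nonneg _
      nlinarith
  have hbddBelow : Filter.IsBoundedUnder (· ≥ ·) Filter.atTop u :=
    Filter.isBoundedUnder_of ⟨0, hu0⟩
  have hbddAbove : Filter.IsBoundedUnder (· ≤ ·) Filter.atTop u :=
    Filter.isBoundedUnder_of ⟨1 + c1, hubd⟩
  have hcobdd : Filter.IsCoboundedUnder (· ≥ ·) Filter.atTop u :=
    hbddAbove.isCoboundedUnder_ge
  constructor
  · constructor
    · -- liminf bound → K-bound for every computable t > s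
      intro hA t ht hst
      have ht0 : (0:ℝ) < t := lt_trans hs0 hst
      have h1t : 1/t < 1/s := one_div_lt_one_div_of_lt hs0 hst
      have hev : ∀ᶠ m in Filter.atTop, 1/t < u m :=
        Filter.eventually_lt_of_lt_liminf (lt_of_lt_of_le h1t hA) hbddBelow
      obtain ⟨M, hM⟩ := Filter.eventually_atTop.1 hev
      refine ⟨M / t, by positivity, ?_⟩
      intro m hm
      by_cases hmM : M ≤ m
      · have h : 1/t < (Cpx T (prefixStr x m) : ℝ) / m := hM m hmM
        have hm0 : (0:ℝ) < m := by
          have : (0:ℕ) < m := lt_of_lt_of_le one_pos hm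
          exact_mod_cast this
        have h' := (div_lt_div_iff₀ ht0 hm0).1 h
        have hMt : (0:ℝ) ≤ M / t := by positivity
        rw [ge_iff_le, sub_le_iff_le_add, div_le_iff₀ ht0]
        nlinarith
      · push_neg at hmM
        have hmM' : (m:ℝ) ≤ M := by exact_mod_cast le_of_lt hmM
        have hK0 : (0:ℝ) ≤ (Cpx T (prefixStr x m) : ℝ) := Nat.cast_nonneg _
        have : (m:ℝ)/t ≤ (M:ℝ)/t := (div_le_div_iff_of_pos_right ht0).2 hmM'
        linarith
    · -- K-bound for every computable t > s → liminf bound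
      intro hB
      show 1 / s ≤ Filter.liminf u Filter.atTop
      refine le_of_forall_lt fun b hb => ?_
      obtain ⟨t', hst', hbt'⟩ : ∃ t' : ℚ, s < (t' : ℝ) ∧ b < 1/((t' : ℚ) : ℝ) := by
        by_cases hb0 : 0 < b
        · have hs_lt : s < 1/b := by
            rw [lt_div_iff₀ hb0]
            rw [lt_div_iff₀ hs0] at hb
            linarith
          obtain ⟨q, hq1, hq2⟩ := exists_rat_btwn hs_lt
          refine ⟨q, hq1, ?_⟩
          have hq0 : (0:ℝ) < q := lt_trans hs0 hq1
          rw [lt_div_iff₀ hq0]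
          rw [lt_div_iff₀ hb0] at hq2
          linarith
        · push_neg at hb0
          obtain ⟨q, hq1, hq2⟩ := exists_rat_btwn (lt_add_one s)
          have hq0 : (0:ℝ) < q := lt_trans hs0 hq1
          exact ⟨q, hq1, lt_of_le_of_lt hb0 (by positivity)⟩
      obtain ⟨c, hc0, hc⟩ := hB t' (Stmt14Aux.computableReal_rat t') hst'
      have ht'0 : (0:ℝ) < (t' : ℝ) := lt_trans hs0 hst'
      set β := (b + 1/((t' : ℚ) : ℝ))/2 with hβ
      have hbβ : b < β := by rw [hβ]; linarith
      have hβt : β < 1/((t' : ℚ) : ℝ) := by rw [hβ]; linarith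
      have hgap : (0:ℝ) < 1/((t' : ℚ) : ℝ) - β := by linarith
      have hev1 : ∀ᶠ (m : ℕ) in Filter.atTop, c / (1/((t' : ℚ) : ℝ) - β) ≤ (m:ℝ) :=
        tendsto_natCast_atTop_atTop.eventually_ge_atTop _
      have hev2 : ∀ᶠ (m : ℕ) in Filter.atTop, 1 ≤ m := Filter.eventually_ge_atTop 1
      have hev : ∀ᶠ m in Filter.atTop, β ≤ u m := by
        filter_upwards [hev1, hev2] with m h1 h2
        have hm0 : (0:ℝ) < m := by
          have : (0:ℕ) < m := lt_of_lt_of_le one_pos h2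
          exact_mod_cast this
        have hKm := hc m h2
        have hcm : c ≤ (1/((t' : ℚ) : ℝ) - β) * m := by
          rw [div_le_iff₀ hgap] at h1
          linarith
        rw [hu]
        show β ≤ (Cpx T (prefixStr x m) : ℝ) / m
        rw [le_div_iff₀ hm0]
        have hexp : (1/((t' : ℚ) : ℝ) - β) * m = m/((t' : ℚ) : ℝ) - β*m := by ring
        rw [ge_iff_le, sub_le_iff_le_add] at hKm
        linarith
      exact lt_of_lt_of_le hbβ (Filter.le_liminf_of_le hcobdd hev)
  · constructor
    · -- T-bound → U-bound
      intro hBT t ht hst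
      obtain ⟨c2, hc2⟩ := Stmt14Aux.cpxT_le_cpxU hTuniv hU hUuniv
      obtain ⟨c, hc0, hc⟩ := hBT t ht hst
      refine ⟨c + c2, by positivity, ?_⟩
      intro m hm
      have h1 : (Cpx T (prefixStr x m) : ℝ) ≤ (Cpx U (prefixStr x m) : ℝ) + c2 := by
        exact_mod_cast hc2 (prefixStr x m)
      have h2 := hc m hm
      rw [ge_iff_le, sub_le_iff_le_add] at h2 ⊢
      linarith
    · -- U-bound → T-bound
      intro hBU t ht hst
      have ht0 : (0:ℝ) < t := lt_trans hs0 hst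
      obtain ⟨t', hst', ht't⟩ := exists_rat_btwn hst
      have ht'0 : (0:ℝ) < (t' : ℝ) := lt_trans hs0 hst'
      have hδ : (0:ℝ) < 1/((t' : ℚ) : ℝ) - 1/t := by
        have := one_div_lt_one_div_of_lt ht'0 ht't
        linarith
      obtain ⟨k0, hk0⟩ := exists_pow_lt_of_lt_one hδ (by norm_num : (1:ℝ)/2 < 1)
      set k := k0 + 1 with hkdef
      have hk1 : 1 ≤ k := Nat.le_add_left 1 k0
      have h2k : (1:ℝ)/2^k ≤ 1/((t' : ℚ) : ℝ) - 1/t := by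
        calc (1:ℝ)/2^k = (1/2)^k := by rw [div_pow, one_pow]
        _ ≤ (1/2)^k0 := pow_le_pow_of_le_one (by norm_num) (by norm_num) (by omega)
        _ ≤ _ := le_of_lt hk0
      obtain ⟨c0, hc0'⟩ := Stmt14Aux.cpxU_le hUuniv hT hTuniv k hk1
      obtain ⟨c, hcnn, hc⟩ := hBU t' (Stmt14Aux.computableReal_rat t') hst'
      have hnn1 : (0:ℝ) ≤ (c1:ℝ) := Nat.cast_nonneg _
      have hnn2 : (0:ℝ) ≤ (k:ℝ) := Nat.cast_nonneg _
      have hnn3 : (0:ℝ) ≤ (c0:ℝ) := Nat.cast_nonneg _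
      refine ⟨c + c1 + k + 1 + c0, by linarith, ?_⟩
      intro m hm
      have h1 : (Cpx U (prefixStr x m) : ℝ) ≤ (Cpx T (prefixStr x m) : ℝ)
          + ((Cpx T (prefixStr x m) / 2^k : ℕ) : ℝ) + 1 + k + c0 := by
        exact_mod_cast hc0' (prefixStr x m)
      have h2 : ((Cpx T (prefixStr x m) / 2^k : ℕ) : ℝ)
          ≤ (Cpx T (prefixStr x m) : ℝ) / 2^k := by
        have := Nat.cast_div_le (α := ℝ) (m := Cpx T (prefixStr x m)) (n := 2^k)
        push_cast at this
        exact this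
      have h3 : (Cpx T (prefixStr x m) : ℝ) ≤ (m:ℝ) + c1 := by exact_mod_cast hKle m
      have h2kpos : (0:ℝ) < 2^k := by positivity
      have h4 : (Cpx T (prefixStr x m) : ℝ)/2^k ≤ ((m:ℝ) + c1)/2^k :=
        (div_le_div_iff_of_pos_right h2kpos).2 h3
      have h1le2k : (1:ℝ) ≤ 2^k := by
        have := Nat.one_le_two_pow (n := k)
        exact_mod_cast this
      have h5 : ((m:ℝ) + c1)/2^k ≤ (m:ℝ) * (1/((t' : ℚ) : ℝ) - 1/t) + c1 := by
        rw [add_div]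
        have e1 : (m:ℝ)/2^k ≤ (m:ℝ) * (1/((t' : ℚ) : ℝ) - 1/t) := by
          rw [div_eq_mul_one_div]
          exact mul_le_mul_of_nonneg_left h2k (Nat.cast_nonneg m)
        have e2 : (c1:ℝ)/2^k ≤ (c1:ℝ) := div_le_self hnn1 h1le2k
        linarith
      have hKm := hc m hm
      rw [ge_iff_le, sub_le_iff_le_add] at hKm
      have hmδ : (m:ℝ) * (1/((t' : ℚ) : ℝ) - 1/t) = (m:ℝ)/((t' : ℚ) : ℝ) - (m:ℝ)/t := by
        ring
      rw [ge_iff_le, sub_le_iff_le_add]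
      linarith
end

section
/- Fix a universal self-delimiting Turing machine U. There exists a real α ∈ (0,1), with binary digit sequence x, such that for every pair of computable reals r, t > 1 and every integer c ≥ 1 there exists a constant b ≥ 0 with H_U(x_0 ⋯ x_{m−1}) ≥ m/r + (c/t)·log₂ m − b for all m ≥ 1. -/
open scoped ENNReal

open scoped Classical

noncomputable section Stmt17Aux

noncomputable def S17cyl (y s : List Bool) : ℝ≥0∞ :=
  if s <+: y then (2 : ℝ≥0∞)⁻¹ ^ y.length
  else if y <+: s then (2 : ℝ≥0∞)⁻¹ ^ s.length else 0

lemma S17half (n : ℕ) : (2 : ℝ≥0∞)⁻¹ ^ (n+1) + (2 : ℝ≥0∞)⁻¹ ^ (n+1) = (2 : ℝ≥0∞)⁻¹ ^ n := by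
  rw [pow_succ, ← two_mul, mul_comm ((2:ℝ≥0∞)⁻¹ ^ n) 2⁻¹, ← mul_assoc,
    ENNReal.mul_inv_cancel (by norm_num) (by norm_num), one_mul]

lemma S17cyl_of_prefix {y s : List Bool} (h : y <+: s) :
    S17cyl y s = (2 : ℝ≥0∞)⁻¹ ^ s.length := by
  unfold S17cyl
  by_cases h2 : s <+: y
  · rw [if_pos h2, h.eq_of_length_le h2.length_le]
  · rw [if_neg h2, if_pos h]

lemma S17cyl_split (y s : List Bool) :
    S17cyl y (s ++ [false]) + S17cyl y (s ++ [true]) = S17cyl y s := by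
  by_cases hys : y <+: s
  · have h1 : ∀ b : Bool, ¬ (s ++ [b] <+: y) := by
      intro b hb
      have h3 := hb.length_le
      have h4 := hys.length_le
      simp only [List.length_append, List.length_cons, List.length_nil] at h3
      omega
    have h2 : ∀ b : Bool, y <+: s ++ [b] := fun b => hys.trans (List.prefix_append s [b])
    rw [S17cyl_of_prefix (h2 false), S17cyl_of_prefix (h2 true), S17cyl_of_prefix hys]
    simp [S17half]
  · by_cases hsy : s <+: y
    · obtain ⟨t, rfl⟩ := hsy
      have ht : t ≠ [] := by rintro rfl; simp at hys
      obtain ⟨b0, t', rfl⟩ := List.exists_cons_of_ne_nil ht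
      have hc : S17cyl (s ++ b0 :: t') s = (2:ℝ≥0∞)⁻¹ ^ (s ++ b0 :: t').length := by
        unfold S17cyl
        rw [if_pos (by exact ⟨b0 :: t', rfl⟩)]
      have hgood : S17cyl (s ++ b0 :: t') (s ++ [b0]) = (2:ℝ≥0∞)⁻¹ ^ (s ++ b0 :: t').length := by
        unfold S17cyl
        rw [if_pos]
        exact ⟨t', by simp⟩
      have hbad : S17cyl (s ++ b0 :: t') (s ++ [!b0]) = 0 := by
        unfold S17cyl
        rw [if_neg, if_neg]
        · intro h
          have := (List.prefix_append_right_inj s).mp h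
          have := (List.cons_prefix_cons.mp this).1
          simp at this
        · intro h
          have := (List.prefix_append_right_inj s).mp h
          have := (List.cons_prefix_cons.mp this).1
          simp at this
      cases b0 <;> simp_all
    · have hz : S17cyl y s = 0 := by unfold S17cyl; rw [if_neg hsy, if_neg hys]
      have hzb : ∀ b : Bool, S17cyl y (s ++ [b]) = 0 := by
        intro b
        unfold S17cyl
        rw [if_neg, if_neg]
        · intro h
          rcases List.prefix_concat_iff.mp h with h' | h'
          · exact hsy (h' ▸ List.prefix_append s [b])
          · exact hys h'
        · intro h
          exact hsy ((List.prefix_append s [b]).trans h)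
      rw [hz, hzb, hzb, add_zero]


-- Kraft inequality for finite prefix-free sets
lemma S17kraft_finset : ∀ (L : ℕ) (F : Finset (List Bool)),
    (∀ p ∈ F, p.length ≤ L) → (∀ p ∈ F, ∀ q ∈ F, p <+: q → p = q) →
    ∑ p ∈ F, (2 : ℝ≥0∞)⁻¹ ^ p.length ≤ 1 := by
  intro L
  induction L with
  | zero =>
    intro F hlen hpf
    have : F ⊆ {[]} := by
      intro p hp
      have := hlen p hp
      simp only [Nat.le_zero, List.length_eq_zero_iff] at this
      simp [this]
    calc ∑ p ∈ F, (2 : ℝ≥0∞)⁻¹ ^ p.length ≤ ∑ p ∈ ({[]} : Finset (List Bool)), (2 : ℝ≥0∞)⁻¹ ^ p.length :=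
          Finset.sum_le_sum_of_subset this
      _ = 1 := by simp
  | succ L ih =>
    intro F hlen hpf
    by_cases hnil : [] ∈ F
    · have : F ⊆ {[]} := by
        intro p hp
        have := hpf [] hnil p hp (List.nil_prefix)
        simp [← this]
      calc ∑ p ∈ F, (2 : ℝ≥0∞)⁻¹ ^ p.length
          ≤ ∑ p ∈ ({[]} : Finset (List Bool)), (2 : ℝ≥0∞)⁻¹ ^ p.length :=
            Finset.sum_le_sum_of_subset this
        _ = 1 := by simp
    · -- split by head
      have key : ∀ b : Bool, ∑ q ∈ (F.filter (fun p => p.head? = some b)).image List.tail,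
          (2 : ℝ≥0∞)⁻¹ ^ q.length ≤ 1 := by
        intro b
        apply ih
        · intro q hq
          simp only [Finset.mem_image, Finset.mem_filter] at hq
          obtain ⟨p, ⟨hpF, hph⟩, rfl⟩ := hq
          have := hlen p hpF
          have hpne : p ≠ [] := by rintro rfl; simp at hph
          cases p with
          | nil => simp at hph
          | cons a p' => simp at this ⊢; omega
        · intro q1 hq1 q2 hq2 hpre
          simp only [Finset.mem_image, Finset.mem_filter] at hq1 hq2
          obtain ⟨p1, ⟨hp1F, hp1h⟩, rfl⟩ := hq1
          obtain ⟨p2, ⟨hp2F, hp2h⟩, rfl⟩ := hq2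
          cases p1 with
          | nil => exact absurd hp1h (by simp)
          | cons a1 t1 =>
            cases p2 with
            | nil => exact absurd hp2h (by simp)
            | cons a2 t2 =>
              simp only [List.head?_cons, Option.some.injEq] at hp1h hp2h
              subst hp1h; subst hp2h
              simp only [List.tail_cons] at hpre ⊢
              have := hpf _ hp1F _ hp2F (List.cons_prefix_cons.mpr ⟨rfl, hpre⟩)
              exact (List.cons.injEq _ _ _ _ ▸ this).2
      -- sum over F splits
      have himg : ∀ b : Bool, ∑ p ∈ F.filter (fun p => p.head? = some b), (2 : ℝ≥0∞)⁻¹ ^ p.length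
          = 2⁻¹ * ∑ q ∈ (F.filter (fun p => p.head? = some b)).image List.tail,
              (2 : ℝ≥0∞)⁻¹ ^ q.length := by
        intro b
        rw [Finset.mul_sum, Finset.sum_image]
        · apply Finset.sum_congr rfl
          intro p hp
          simp only [Finset.mem_filter] at hp
          cases p with
          | nil => exact absurd hp.2 (by simp)
          | cons a t => simp [pow_succ, mul_comm]
        · intro p1 hp1 p2 hp2 htl
          simp only [Finset.mem_coe, Finset.mem_filter] at hp1 hp2
          cases p1 with
          | nil => exact absurd hp1.2 (by simp)
          | cons a1 t1 =>
            cases p2 with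
            | nil => exact absurd hp2.2 (by simp)
            | cons a2 t2 =>
              simp only [List.head?_cons, Option.some.injEq] at hp1 hp2
              simp only [List.tail_cons] at htl
              rw [hp1.2, hp2.2, htl]
      have hsplit : F = F.filter (fun p => p.head? = some false) ∪
          F.filter (fun p => p.head? = some true) := by
        ext p
        simp only [Finset.mem_union, Finset.mem_filter]
        constructor
        · intro hp
          cases p with
          | nil => exact absurd hp hnil
          | cons a t => cases a <;> simp [hp]
        · rintro (h | h) <;> exact h.1
      have hdisj : Disjoint (F.filter (fun p => p.head? = some false))
          (F.filter (fun p => p.head? = some true)) := by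
        rw [Finset.disjoint_filter]
        intro p _ h1 h2
        rw [h1] at h2; simp at h2
      calc ∑ p ∈ F, (2 : ℝ≥0∞)⁻¹ ^ p.length
          = ∑ p ∈ F.filter (fun p => p.head? = some false), (2 : ℝ≥0∞)⁻¹ ^ p.length
            + ∑ p ∈ F.filter (fun p => p.head? = some true), (2 : ℝ≥0∞)⁻¹ ^ p.length := by
            conv_lhs => rw [hsplit]
            exact Finset.sum_union hdisj
        _ ≤ 2⁻¹ * 1 + 2⁻¹ * 1 := by
            rw [himg false, himg true]
            gcongr
            · exact key false
            · exact key true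
        _ ≤ 1 := by
            rw [mul_one, ENNReal.inv_two_add_inv_two]


lemma S17kraft (U : List Bool →. List Bool) (hsd : SelfDelim U) :
    ∑' p : List Bool, (if (U p).Dom then (2 : ℝ≥0∞)⁻¹ ^ p.length else 0) ≤ 1 := by
  rw [ENNReal.tsum_eq_iSup_sum]
  apply iSup_le
  intro F
  classical
  have : ∑ p ∈ F, (if (U p).Dom then (2 : ℝ≥0∞)⁻¹ ^ p.length else 0)
      = ∑ p ∈ F.filter (fun p => (U p).Dom), (2 : ℝ≥0∞)⁻¹ ^ p.length := by
    rw [Finset.sum_filter]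
  rw [this]
  set G := F.filter (fun p => (U p).Dom) with hG
  by_cases hne : G.Nonempty
  · obtain ⟨L, hL⟩ : ∃ L, ∀ p ∈ G, p.length ≤ L :=
      ⟨(G.sup List.length), fun p hp => Finset.le_sup hp⟩
    apply S17kraft_finset L G hL
    intro p hp q hq hpq
    simp only [hG, Finset.mem_filter] at hp hq
    exact hsd p hp.2 q hq.2 hpq
  · rw [Finset.not_nonempty_iff_eq_empty] at hne
    simp [hne]

-- the bad set
def S17Bad (U : List Bool →. List Bool) (y : List Bool) : Prop :=
  ∃ p : List Bool, p.length < y.length ∧ y ∈ U p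

def S17Forb (U : List Bool →. List Bool) (y : List Bool) : Prop :=
  S17Bad U y ∨ y = [false, false] ∨ y = [true, true, true]

lemma S17badsum (U : List Bool →. List Bool) (hsd : SelfDelim U) :
    ∑' y : List Bool, (if S17Bad U y then (2 : ℝ≥0∞)⁻¹ ^ y.length else 0) ≤ 2⁻¹ := by
  -- witness function
  have hwit : ∀ y : List Bool, S17Bad U y → ∃ p : List Bool, p.length < y.length ∧ y ∈ U p :=
    fun y h => h
  set wit : ↑{y : List Bool | S17Bad U y} → List Bool :=
    fun y => Classical.choose (hwit y.1 y.2) with hwitdef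
  have hwspec : ∀ y : ↑{y : List Bool | S17Bad U y},
      (wit y).length < y.1.length ∧ y.1 ∈ U (wit y) :=
    fun y => Classical.choose_spec (hwit y.1 y.2)
  have hinj : Function.Injective wit := by
    intro y1 y2 h
    have h1 := (hwspec y1).2
    have h2 := (hwspec y2).2
    rw [h] at h1
    exact Subtype.ext (Part.mem_unique h1 h2)
  have step1 : ∑' y : List Bool, (if S17Bad U y then (2 : ℝ≥0∞)⁻¹ ^ y.length else 0)
      = ∑' y : ↑{y : List Bool | S17Bad U y}, (2 : ℝ≥0∞)⁻¹ ^ y.1.length := by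
    rw [tsum_subtype {y : List Bool | S17Bad U y} (fun l => (2 : ℝ≥0∞)⁻¹ ^ l.length)]
    exact tsum_congr fun y => by rw [Set.indicator_apply]; exact if_congr Iff.rfl rfl rfl
  rw [step1]
  have step2 : ∑' y : ↑{y : List Bool | S17Bad U y}, (2 : ℝ≥0∞)⁻¹ ^ y.1.length
      ≤ ∑' y : ↑{y : List Bool | S17Bad U y},
          (if (U (wit y)).Dom then (2 : ℝ≥0∞)⁻¹ ^ ((wit y).length + 1) else 0) := by
    apply ENNReal.tsum_le_tsum
    intro y
    have h1 := (hwspec y).1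
    have h2 := (hwspec y).2
    rw [if_pos (Part.dom_iff_mem.mpr ⟨y.1, h2⟩)]
    exact pow_le_pow_right_of_le_one' (by norm_num) (by omega)
  have step3 : ∑' y : ↑{y : List Bool | S17Bad U y},
        (if (U (wit y)).Dom then (2 : ℝ≥0∞)⁻¹ ^ ((wit y).length + 1) else 0)
      ≤ ∑' p : List Bool, (if (U p).Dom then (2 : ℝ≥0∞)⁻¹ ^ (p.length + 1) else 0) :=
    ENNReal.tsum_comp_le_tsum_of_injective hinj _
  have step4 : ∑' p : List Bool, (if (U p).Dom then (2 : ℝ≥0∞)⁻¹ ^ (p.length + 1) else 0)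
      = 2⁻¹ * ∑' p : List Bool, (if (U p).Dom then (2 : ℝ≥0∞)⁻¹ ^ p.length else 0) := by
    rw [← ENNReal.tsum_mul_left]
    congr 1
    ext p
    by_cases h : (U p).Dom <;> simp [h, pow_succ, mul_comm]
  calc _ ≤ _ := step2
    _ ≤ _ := step3
    _ = _ := step4
    _ ≤ 2⁻¹ * 1 := by gcongr; exact S17kraft U hsd
    _ = 2⁻¹ := mul_one _


noncomputable def S17w (U : List Bool →. List Bool) (s : List Bool) : ℝ≥0∞ :=
  ∑' y : List Bool, if S17Forb U y then S17cyl y s else 0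

lemma S17w_split (U : List Bool →. List Bool) (s : List Bool) :
    S17w U (s ++ [false]) + S17w U (s ++ [true]) = S17w U s := by
  unfold S17w
  rw [← ENNReal.tsum_add]
  apply tsum_congr
  intro y
  by_cases h : S17Forb U y
  · simp only [if_pos h]; exact S17cyl_split y s
  · simp [h]

lemma S17w_le_of_forb_prefix {U : List Bool →. List Bool} {y s : List Bool}
    (hf : S17Forb U y) (hp : y <+: s) : (2 : ℝ≥0∞)⁻¹ ^ s.length ≤ S17w U s := by
  have : (2 : ℝ≥0∞)⁻¹ ^ s.length = if S17Forb U y then S17cyl y s else 0 := by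
    rw [if_pos hf, S17cyl_of_prefix hp]
  rw [this]
  exact ENNReal.le_tsum y

lemma S17w_nil (U : List Bool →. List Bool) (hsd : SelfDelim U) : S17w U [] < 1 := by
  have hb : ∀ y : List Bool, (if S17Forb U y then S17cyl y [] else 0)
      ≤ (if S17Bad U y then (2 : ℝ≥0∞)⁻¹ ^ y.length else 0)
        + ((if y = [false, false] then (2 : ℝ≥0∞)⁻¹ ^ 2 else 0)
          + (if y = [true, true, true] then (2 : ℝ≥0∞)⁻¹ ^ 3 else 0)) := by
    intro y
    by_cases h : S17Forb U y
    · rw [if_pos h]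
      have hc : S17cyl y [] = (2 : ℝ≥0∞)⁻¹ ^ y.length := by
        unfold S17cyl
        rw [if_pos (List.nil_prefix)]
      rw [hc]
      rcases h with h | h | h
      · exact le_add_right (le_of_eq (if_pos h).symm)
      · subst h
        refine le_trans ?_ (le_add_left (le_add_right (le_of_eq (if_pos rfl).symm)))
        norm_num
      · subst h
        refine le_trans ?_ (le_add_left (le_add_left (le_of_eq (if_pos rfl).symm)))
        norm_num
    · simp [h]
  have := ENNReal.tsum_le_tsum hb
  unfold S17w
  apply lt_of_le_of_lt (this.trans (le_of_eq (ENNReal.tsum_add)))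
  rw [ENNReal.tsum_add]
  have h1 := S17badsum U hsd
  have h2 : ∑' y : List Bool, (if y = [false, false] then (2 : ℝ≥0∞)⁻¹ ^ 2 else 0) = (2 : ℝ≥0∞)⁻¹ ^ 2 :=
    tsum_eq_single [false, false] (by intro y hy; rw [if_neg hy])
  have h3 : ∑' y : List Bool, (if y = [true, true, true] then (2 : ℝ≥0∞)⁻¹ ^ 3 else 0) = (2 : ℝ≥0∞)⁻¹ ^ 3 :=
    tsum_eq_single [true, true, true] (by intro y hy; rw [if_neg hy])
  calc _ ≤ 2⁻¹ + ((2 : ℝ≥0∞)⁻¹ ^ 2 + (2 : ℝ≥0∞)⁻¹ ^ 3) := by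
        rw [h2, h3]
        exact add_le_add h1 le_rfl
    _ < 1 := by
        have : (2:ℝ≥0∞)⁻¹ + ((2 : ℝ≥0∞)⁻¹ ^ 2 + (2 : ℝ≥0∞)⁻¹ ^ 3) = ENNReal.ofReal (7/8) := by
          rw [show ((2:ℝ≥0∞)⁻¹ = ENNReal.ofReal (1/2)) from by
            rw [ENNReal.ofReal_div_of_pos (by norm_num)]
            simp [ENNReal.ofReal_one, ENNReal.ofReal_ofNat]]
          rw [← ENNReal.ofReal_pow (by norm_num), ← ENNReal.ofReal_pow (by norm_num),
            ← ENNReal.ofReal_add (by norm_num) (by positivity),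
            ← ENNReal.ofReal_add (by norm_num) (by positivity)]
          norm_num
        rw [this, show (1:ℝ≥0∞) = ENNReal.ofReal 1 from by simp]
        rw [ENNReal.ofReal_lt_ofReal_iff (by norm_num)]
        norm_num

def S17Inv (U : List Bool →. List Bool) (s : List Bool) : Prop :=
  S17w U s < (2 : ℝ≥0∞)⁻¹ ^ s.length

lemma S17step {U : List Bool →. List Bool} {s : List Bool} (h : S17Inv U s) :
    ∃ b : Bool, S17Inv U (s ++ [b]) := by
  by_contra hc
  push_neg at hc
  have h0 := hc false
  have h1 := hc true
  unfold S17Inv at *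
  push_neg at h0 h1
  have : (2 : ℝ≥0∞)⁻¹ ^ s.length ≤ S17w U s := by
    rw [← S17w_split U s, ← S17half s.length]
    have e : ∀ b : Bool, (s ++ [b]).length = s.length + 1 := by simp
    exact add_le_add (le_trans (le_of_eq (by rw [e false])) h0)
      (le_trans (le_of_eq (by rw [e true])) h1)
  exact absurd h this.not_gt

def S17next (U : List Bool →. List Bool) :
    {s : List Bool // S17Inv U s} → {s : List Bool // S17Inv U s} :=
  fun s => ⟨s.1 ++ [Classical.choose (S17step s.2)], Classical.choose_spec (S17step s.2)⟩

noncomputable def S17seq (U : List Bool →. List Bool) (h0 : S17Inv U []) (n : ℕ) :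
    {s : List Bool // S17Inv U s} := (S17next U)^[n] ⟨[], h0⟩

lemma S17seq_succ (U : List Bool →. List Bool) (h0 : S17Inv U []) (n : ℕ) :
    ∃ b : Bool, (S17seq U h0 (n+1)).1 = (S17seq U h0 n).1 ++ [b] := by
  refine ⟨Classical.choose (S17step (S17seq U h0 n).2), ?_⟩
  unfold S17seq
  rw [Function.iterate_succ_apply']
  rfl

lemma S17seq_length (U : List Bool →. List Bool) (h0 : S17Inv U []) (n : ℕ) :
    (S17seq U h0 n).1.length = n := by
  induction n with
  | zero => rfl
  | succ n ih =>
    obtain ⟨b, hb⟩ := S17seq_succ U h0 n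
    rw [hb]; simp [ih]

noncomputable def S17x (U : List Bool →. List Bool) (h0 : S17Inv U []) (n : ℕ) : Bool :=
  (S17seq U h0 (n+1)).1.getD n false

lemma S17prefix (U : List Bool →. List Bool) (h0 : S17Inv U []) (m : ℕ) :
    prefixStr (S17x U h0) m = (S17seq U h0 m).1 := by
  induction m with
  | zero => simp [prefixStr, S17seq]
  | succ m ih =>
    obtain ⟨b, hb⟩ := S17seq_succ U h0 m
    have key : ∀ (s : List Bool) (b : Bool), (s ++ [b]).getD s.length false = b := by
      intro s b
      rw [List.getD_eq_getElem?_getD, List.getElem?_concat_length]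
      rfl
    have hx : S17x U h0 m = b := by
      have hl : (S17seq U h0 m).1.length = m := S17seq_length U h0 m
      unfold S17x
      rw [hb]
      generalize (S17seq U h0 m).1 = s at hl ⊢
      subst hl
      exact key s b
    unfold prefixStr at *
    rw [List.range_succ, List.map_append, ih, hb, List.map_singleton, hx]

lemma S17no_forb_prefix (U : List Bool →. List Bool) (h0 : S17Inv U [])
    {y : List Bool} {m : ℕ} (hp : y <+: (S17seq U h0 m).1) : ¬ S17Forb U y := by
  intro hf
  have h1 := S17w_le_of_forb_prefix hf hp
  have h2 := (S17seq U h0 m).2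
  unfold S17Inv at h2
  exact absurd (lt_of_le_of_lt h1 h2) (lt_irrefl _)

def S17parse (l : List Bool) : Option (List Bool) :=
  if l.length = 2 * l.idxOf false + 1 then some (l.drop (l.idxOf false + 1)) else none

def S17C : List Bool →. List Bool := fun l => Part.ofOption (S17parse l)

lemma S17drop_iterate (n : ℕ) (l : List Bool) : l.drop n = List.tail^[n] l := by
  induction n generalizing l with
  | zero => simp
  | succ n ih =>
    rw [Function.iterate_succ_apply, ← ih, ← List.drop_one, List.drop_drop, Nat.add_comm]

lemma S17parse_computable : Computable S17parse := by
  have hidx : Primrec (fun l : List Bool => l.idxOf false) :=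
    Primrec.list_idxOf.comp (.const false) .id
  have hdrop : Primrec (fun l : List Bool => l.drop (l.idxOf false + 1)) := by
    have : Primrec (fun l : List Bool => List.tail^[l.idxOf false + 1] l) :=
      Primrec.nat_iterate (Primrec.succ.comp hidx) .id
        ((Primrec.list_tail.comp Primrec.snd).to₂)
    exact this.of_eq fun l => (S17drop_iterate _ l).symm
  have hcond : PrimrecPred (fun l : List Bool => l.length = 2 * l.idxOf false + 1) :=
    PrimrecRel.comp Primrec.eq Primrec.list_length
      (Primrec.succ.comp (Primrec.nat_mul.comp (.const 2) hidx))
  have : Primrec S17parse :=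
    Primrec.ite hcond (Primrec.option_some.comp hdrop) (.const none)
  exact this.to_comp

lemma S17C_partrec : Partrec S17C :=
  Computable.ofOption S17parse_computable

lemma S17C_dom {l : List Bool} (h : (S17C l).Dom) :
    l.length = 2 * l.idxOf false + 1 := by
  by_contra hc
  simp [S17C, S17parse, hc] at h

lemma S17C_selfDelim : SelfDelim S17C := by
  intro p hp q hq hpq
  have hp' := S17C_dom hp
  have hq' := S17C_dom hq
  have hfm : false ∈ p := by
    by_contra hf
    rw [List.idxOf_eq_length_iff.mpr hf] at hp'
    omega
  obtain ⟨r, rfl⟩ := hpq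
  rw [List.idxOf_append_of_mem hfm] at hq'
  have : r.length = 0 := by
    have := List.length_append (as := p) (bs := r)
    omega
  rw [List.length_eq_zero_iff.mp this, List.append_nil]

lemma S17C_surj (y : List Bool) :
    ∃ l : List Bool, S17C l = Part.some y := by
  refine ⟨List.replicate y.length true ++ false :: y, ?_⟩
  have hidx : (List.replicate y.length true ++ false :: y).idxOf false = y.length := by
    rw [List.idxOf_append_of_notMem]
    · simp [List.idxOf_cons_self]
    · simp
  have hlen : (List.replicate y.length true ++ false :: y).length = 2 * y.length + 1 := by
    simp; ring
  have hdrop : (List.replicate y.length true ++ false :: y).drop (y.length + 1) = y := by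
    have h2 : List.replicate y.length true ++ false :: y
        = (List.replicate y.length true ++ [false]) ++ y := by simp
    rw [h2]
    have hl : (List.replicate y.length true ++ [false]).length = y.length + 1 := by simp
    rw [← hl, List.drop_left]
  simp only [S17C, S17parse, hidx, hlen, if_pos rfl, hdrop]
  rfl

lemma S17geom_summable : Summable (fun i : ℕ => (2 : ℝ)⁻¹ ^ (i + 1)) := by
  have h := summable_geometric_two.mul_left (2:ℝ)⁻¹
  refine h.congr fun i => ?_
  rw [pow_succ', one_div, inv_pow]

lemma S17dig_summable (x : ℕ → Bool) :
    Summable (fun i : ℕ => (if x i then (1 : ℝ) else 0) * (2 : ℝ)⁻¹ ^ (i + 1)) := by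
  apply Summable.of_nonneg_of_le (fun i => by positivity) (fun i => ?_) S17geom_summable
  by_cases h : x i <;> simp [h]

lemma S17geom : ∑' i : ℕ, (2 : ℝ)⁻¹ ^ (i + 1) = 1 := by
  rw [show (fun i : ℕ => (2:ℝ)⁻¹ ^ (i+1)) = (fun i : ℕ => 1/2/2^i) from funext fun i => by
    rw [pow_succ', div_div, one_div, mul_inv, inv_pow]]
  exact tsum_geometric_two' 1

lemma S17realDigits_pos {x : ℕ → Bool} {i : ℕ} (h : x i = true) : 0 < realDigits x := by
  have hle := Summable.le_tsum (S17dig_summable x) i (fun j _ => by positivity)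
  have h2 : (0:ℝ) < (if x i then (1:ℝ) else 0) * (2 : ℝ)⁻¹ ^ (i + 1) := by
    rw [h]; norm_num
  exact lt_of_lt_of_le h2 hle

lemma S17realDigits_lt_one {x : ℕ → Bool} {j : ℕ} (h : x j = false) : realDigits x < 1 := by
  have hlt : realDigits x < ∑' i : ℕ, (2 : ℝ)⁻¹ ^ (i + 1) := by
    apply Summable.tsum_lt_tsum_of_nonneg (i := j)
    · intro i; positivity
    · intro i
      by_cases hi : x i <;> simp [hi]
    · rw [h]; norm_num
    · exact S17geom_summable
  rw [S17geom] at hlt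
  exact hlt

lemma S17log_bound {r t : ℝ} (hr : 1 < r) (ht : 1 < t) (c : ℕ) (hc : 1 ≤ c) :
    ∃ b : ℝ, 0 ≤ b ∧ ∀ m : ℕ, 1 ≤ m →
      (m : ℝ) / r + ((c : ℝ) / t) * Real.logb 2 m - b ≤ (m : ℝ) := by
  have hr0 : (0:ℝ) < r := by linarith
  set ε : ℝ := 1 - 1/r with hε
  have hεpos : 0 < ε := by
    have h1 : 1/r < 1 := by rw [div_lt_one hr0]; exact hr
    rw [hε]; linarith
  set K : ℝ := (c : ℝ) / t with hK
  have hKpos : 0 ≤ K := by positivity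
  have hlog2 : 0 < Real.log 2 := Real.log_pos (by norm_num)
  set K' : ℝ := K / Real.log 2 with hK'
  have hK'pos : 0 ≤ K' := by positivity
  refine ⟨K' ^ 2 / ε, by positivity, ?_⟩
  intro m hm
  have hm1 : (1:ℝ) ≤ (m:ℝ) := by exact_mod_cast hm
  set u : ℝ := Real.sqrt m with hu
  have hu1 : 1 ≤ u := by
    rw [hu, show (1:ℝ) = Real.sqrt 1 from (Real.sqrt_one).symm]
    exact Real.sqrt_le_sqrt hm1
  have hum : u ^ 2 = (m:ℝ) := Real.sq_sqrt (by linarith)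
  have hlogm : Real.log m = 2 * Real.log u := by
    rw [← hum, Real.log_pow]
    push_cast; ring
  have hlogu : Real.log u ≤ u := by
    have := Real.log_le_sub_one_of_pos (by linarith : (0:ℝ) < u)
    linarith
  have key : K * Real.logb 2 m ≤ ε * (m:ℝ) + K' ^ 2 / ε := by
    have h1 : K * Real.logb 2 m = K' * Real.log m := by
      rw [Real.logb, hK']
      field_simp
    rw [h1, hlogm, ← hum]
    have h2 : K' * (2 * Real.log u) ≤ 2 * K' * u := by
      nlinarith [mul_le_mul_of_nonneg_left hlogu (by positivity : (0:ℝ) ≤ 2 * K')]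
    have h3 : 2 * K' * u ≤ ε * u ^ 2 + K' ^ 2 / ε := by
      have h4 := div_nonneg (sq_nonneg (ε * u - K')) hεpos.le
      have h5 : (ε * u - K') ^ 2 / ε = ε * u ^ 2 - 2 * K' * u + K' ^ 2 / ε := by
        field_simp
        ring
      rw [h5] at h4
      linarith
    linarith
  have hmr : (m:ℝ) / r = (m:ℝ) - ε * m := by
    rw [hε]
    field_simp
    ring
  linarith

end Stmt17Aux

/-- There is a real `α ∈ (0,1)` such that for all computable `r, t > 1` and
every integer `c ≥ 1` there is `b ≥ 0` with
`H_U(α[m]) ≥ m/r + (c/t)·log₂ m − b` for all `m ≥ 1`. -/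
theorem stmt_17 (U : List Bool →. List Bool) (hU : Partrec U) (hUuniv : UnivSD U) :
    ∃ α : ℝ, 0 < α ∧ α < 1 ∧ ∃ x : ℕ → Bool, α = realDigits x ∧
      ∀ r t : ℝ, ComputableReal r → ComputableReal t → 1 < r → 1 < t →
        ∀ c : ℕ, 1 ≤ c →
          ∃ b : ℝ, 0 ≤ b ∧ ∀ m : ℕ, 1 ≤ m →
            (Cpx U (prefixStr x m) : ℝ) ≥
              m / r + ((c : ℝ) / t) * Real.logb 2 m - b := by
  obtain ⟨hsd, huniv⟩ := hUuniv
  have h0 : S17Inv U [] := by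
    unfold S17Inv
    simpa using S17w_nil U hsd
  set x := S17x U h0 with hxdef
  have hpre : ∀ m, prefixStr x m = (S17seq U h0 m).1 := S17prefix U h0
  have hforb : ∀ (m : ℕ) (y : List Bool), y <+: (S17seq U h0 m).1 → ¬ S17Forb U y :=
    fun m y h => S17no_forb_prefix U h0 h
  -- digit structure
  have hpre2 : prefixStr x 2 = [x 0, x 1] := by
    simp [prefixStr, List.range_succ]
  have hpre3 : prefixStr x 3 = [x 0, x 1, x 2] := by
    simp [prefixStr, List.range_succ]
  have hnot00 : ¬ ([x 0, x 1] = [false, false]) := by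
    intro h
    exact hforb 2 [x 0, x 1] (hpre2 ▸ (hpre 2) ▸ List.prefix_refl _) (Or.inr (Or.inl h))
  have hnot111 : ¬ ([x 0, x 1, x 2] = [true, true, true]) := by
    intro h
    exact hforb 3 [x 0, x 1, x 2] (hpre3 ▸ (hpre 3) ▸ List.prefix_refl _) (Or.inr (Or.inr h))
  have hex_true : ∃ i, x i = true := by
    by_cases h0' : x 0 = true
    · exact ⟨0, h0'⟩
    · by_cases h1' : x 1 = true
      · exact ⟨1, h1'⟩
      · exfalso
        apply hnot00
        simp [Bool.not_eq_true] at h0' h1'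
        rw [h0', h1']
  have hex_false : ∃ j, x j = false := by
    by_cases h0' : x 0 = false
    · exact ⟨0, h0'⟩
    · by_cases h1' : x 1 = false
      · exact ⟨1, h1'⟩
      · by_cases h2' : x 2 = false
        · exact ⟨2, h2'⟩
        · exfalso
          apply hnot111
          simp [Bool.not_eq_false] at h0' h1' h2'
          rw [h0', h1', h2']
  obtain ⟨i0, hi0⟩ := hex_true
  obtain ⟨j0, hj0⟩ := hex_false
  -- surjectivity of U
  obtain ⟨cc, hcc⟩ := huniv S17C S17C_partrec S17C_selfDelim
  have hsurj : ∀ y : List Bool, ∃ p : List Bool, y ∈ U p := by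
    intro y
    obtain ⟨l, hl⟩ := S17C_surj y
    have hldom : l ∈ dom S17C := by
      simp only [dom, Set.mem_setOf_eq, hl]
      exact Part.some_dom y
    obtain ⟨p, _, hp⟩ := hcc l hldom
    refine ⟨p, ?_⟩
    rw [hp, hl]
    exact Part.mem_some y
  -- complexity lower bound : Cpx U (prefixStr x m) ≥ m
  have hcpx : ∀ m : ℕ, 1 ≤ m → m ≤ Cpx U (prefixStr x m) := by
    intro m hm
    set y := prefixStr x m with hy
    have hylen : y.length = m := by
      rw [hy]; simp [prefixStr]
    set S := {n : ℕ | ∃ w : List Bool, w.length = n ∧ y ∈ U w} with hS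
    have hne : S.Nonempty := by
      obtain ⟨p, hp⟩ := hsurj y
      exact ⟨p.length, p, rfl, hp⟩
    have hmem : sInf S ∈ S := Nat.sInf_mem hne
    obtain ⟨w, hwlen, hwmem⟩ := hmem
    by_contra hlt
    push_neg at hlt
    have hbad : S17Bad U y := ⟨w, by rw [hwlen, hylen]; exact hlt, hwmem⟩
    exact hforb m y ((hpre m) ▸ List.prefix_refl _) (Or.inl hbad)
  refine ⟨realDigits x, S17realDigits_pos hi0, S17realDigits_lt_one hj0, x, rfl, ?_⟩
  intro r t hrc htc hr ht c hc
  obtain ⟨b, hb0, hb⟩ := S17log_bound hr ht c hc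
  refine ⟨b, hb0, ?_⟩
  intro m hm
  have h1 := hb m hm
  have h2 : (m : ℝ) ≤ (Cpx U (prefixStr x m) : ℝ) := by
    exact_mod_cast hcpx m hm
  linarith
end

section
/- For every integer N ≥ 2, every positive rational q can be written as a finite sum of distinct unit fractions whose denominators are all greater than or equal to N: there exists a finite set S of natural numbers with n ≥ N for all n ∈ S and q = ∑_{n ∈ S} 1/n. -/
/-- If a positive rational equals `p / q` with `q > 0`, its numerator is at most `p`. -/
lemma aux_num_le (p q : ℤ) (x : ℚ) (hq : 0 < q) (hx : 0 < x) (hxeq : x = (p : ℚ) / q) :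
    x.num ≤ p := by
  have hden : (x.den : ℤ) ∣ q := by
    have := Rat.den_dvd p q
    rwa [Rat.divInt_eq_div, ← hxeq] at this
  have hdenle : (x.den : ℤ) ≤ q := Int.le_of_dvd hq hden
  have hp : 0 < p := by
    have hx' : (0:ℚ) < (p:ℚ)/q := hxeq ▸ hx
    have hq' : (0:ℚ) < (q:ℚ) := by exact_mod_cast hq
    rcases div_pos_iff.mp hx' with ⟨h, _⟩ | ⟨_, h⟩
    · exact_mod_cast h
    · linarith
  have key : x.num * q = p * x.den := by
    have hd : (0:ℚ) < (x.den : ℚ) := by exact_mod_cast x.pos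
    have hq' : (0:ℚ) < (q : ℚ) := by exact_mod_cast hq
    have hx' : (x.num : ℚ) = x * x.den := (div_eq_iff (ne_of_gt hd)).mp (Rat.num_div_den x)
    have : (x.num : ℚ) * q = p * x.den := by
      rw [hx', hxeq]; field_simp
    exact_mod_cast this
  nlinarith [x.pos, key, hdenle, hp, mul_le_mul_of_nonneg_left hdenle (le_of_lt hp)]

lemma greedy_s19 (a : ℕ) : ∀ r : ℚ, r.num.toNat = a → 0 < r → ∀ m : ℕ, 1 ≤ m → r * m < 1 →
    ∃ S : Finset ℕ, (∀ n ∈ S, m < n) ∧ r = ∑ n ∈ S, (1 : ℚ) / n := by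
  induction a using Nat.strong_induction_on with
  | _ a ih =>
  intro r ha hr m hm hrm
  have hrinv : (0:ℚ) < 1 / r := by positivity
  have hceil : (0:ℤ) < ⌈(1/r : ℚ)⌉ := Int.ceil_pos.mpr hrinv
  set n : ℕ := ⌈(1/r : ℚ)⌉.toNat with hn
  have hnz : ((n : ℤ) : ℚ) = ((⌈(1/r : ℚ)⌉ : ℤ) : ℚ) := by
    norm_cast
    exact Int.toNat_of_nonneg hceil.le
  have hge : (1/r : ℚ) ≤ n := by
    push_cast at hnz
    rw [hnz]; exact Int.le_ceil _
  have hlt1 : ((n : ℚ) - 1) < 1 / r := by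
    push_cast at hnz
    rw [hnz]
    linarith [Int.ceil_lt_add_one (1/r : ℚ)]
  have hmn : m < n := by
    have h1 : (m : ℚ) < 1 / r := by
      rw [lt_div_iff₀ hr]; linarith [hrm]
    exact_mod_cast h1.trans_le hge
  have hn1 : 1 ≤ n := le_trans hm hmn.le
  have hnQ : (0:ℚ) < n := by exact_mod_cast hn1
  have hle : (1 : ℚ) / n ≤ r := by
    rw [div_le_iff₀ hnQ]
    have := (div_le_iff₀ hr).mp hge
    linarith
  have hrlt : r * ((n : ℚ) - 1) < 1 := by
    rcases eq_or_lt_of_le hn1 with h1 | h1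
    · have : (n:ℚ) = 1 := by exact_mod_cast h1.symm
      simp [this]
    · have hpos : (0:ℚ) < (n:ℚ) - 1 := by
        have : (1:ℕ) < n := h1
        have : (1:ℚ) < n := by exact_mod_cast this
        linarith
      calc r * ((n:ℚ) - 1) < r * (1/r) := by
            apply mul_lt_mul_of_pos_left hlt1 hr
        _ = 1 := by field_simp
  set r' : ℚ := r - 1/n with hr'
  have hr'0 : 0 ≤ r' := by rw [hr']; exact sub_nonneg.mpr hle
  rcases eq_or_lt_of_le hr'0 with h0 | h0
  · refine ⟨{n}, by simpa using hmn, ?_⟩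
    rw [Finset.sum_singleton]
    have : (0:ℚ) = r - 1/n := h0
    linarith
  · -- numerator decreases
    have hrd : (0:ℚ) < (r.den : ℚ) := by exact_mod_cast r.pos
    have hnum : (r.num : ℚ) = r * r.den := (div_eq_iff (ne_of_gt hrd)).mp (Rat.num_div_den r)
    have hr'eq : r' = ((r.num * n - r.den : ℤ) : ℚ) / ((r.den * n : ℤ) : ℚ) := by
      rw [hr']
      push_cast
      field_simp
      linear_combination (-(n:ℚ)) * hnum
    have hnum_le : r'.num ≤ r.num * n - r.den := by
      refine aux_num_le _ _ _ ?_ h0 hr'eq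
      exact mul_pos (by exact_mod_cast r.pos) (by exact_mod_cast hn1)
    have hnumlt : r.num * n - r.den < r.num := by
      have h2 : (r.num : ℚ) * ((n:ℚ) - 1) < r.den := by
        rw [hnum]
        calc r * (r.den : ℚ) * ((n:ℚ)-1) = (r * ((n:ℚ)-1)) * r.den := by ring
          _ < 1 * r.den := by exact mul_lt_mul_of_pos_right hrlt hrd
          _ = r.den := one_mul _
      have h3 : r.num * ((n:ℤ) - 1) < r.den := by exact_mod_cast (by push_cast; linarith : ((r.num * ((n:ℤ)-1) : ℤ) : ℚ) < ((r.den : ℤ) : ℚ))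
      linarith [h3]
    have hr'num_pos : 0 < r'.num := Rat.num_pos.mpr h0
    have hrnum_pos : 0 < r.num := Rat.num_pos.mpr hr
    have hda : r'.num.toNat < a := by
      rw [← ha]
      omega
    have hr'm : r' * n < 1 := by
      have hr1 : r < 1 := by
        have : (1:ℚ) ≤ m := by exact_mod_cast hm
        nlinarith
      have : r' * n = r * ((n:ℚ) - 1) + r - 1 := by
        rw [hr']; field_simp; ring
      linarith
    obtain ⟨S', hS'mem, hS'sum⟩ := ih r'.num.toNat hda r' rfl h0 n hn1 hr'm
    refine ⟨insert n S', ?_, ?_⟩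
    · intro k hk
      rcases Finset.mem_insert.mp hk with h | h
      · omega
      · exact lt_trans hmn (hS'mem k h)
    · have hnotmem : n ∉ S' := fun h => lt_irrefl n (hS'mem n h)
      rw [Finset.sum_insert hnotmem, ← hS'sum, hr']
      ring

/-- Every positive rational can be written as a finite sum of distinct unit
fractions whose denominators are all at least `N`. -/
theorem stmt_19 (N : ℕ) (hN : 2 ≤ N) (q : ℚ) (hq : 0 < q) :
    ∃ S : Finset ℕ, (∀ n ∈ S, N ≤ n) ∧ q = ∑ n ∈ S, (1 : ℚ) / n := by
  -- Step 1: find k with q < ∑_{n ∈ Ico N k} 1/n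
  have hexists : ∃ k : ℕ, q < ∑ n ∈ Finset.Ico N k, (1 : ℚ) / n := by
    have H := Real.tendsto_sum_range_one_div_nat_succ_atTop
    have C := ∑ i ∈ Finset.range N, (1 : ℝ) / (i + 1)
    obtain ⟨k, hk1, hk2⟩ := ((Filter.eventually_ge_atTop N).and
      (H.eventually_gt_atTop ((q : ℝ) + ∑ i ∈ Finset.range N, (1 : ℝ) / (i + 1)))).exists
    refine ⟨k, ?_⟩
    have hsub : ∑ i ∈ Finset.Ico N k, (1 : ℝ) / (i + 1)
        = ∑ i ∈ Finset.range k, (1:ℝ)/(i+1) - ∑ i ∈ Finset.range N, (1:ℝ)/(i+1) :=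
      Finset.sum_Ico_eq_sub _ hk1
    have hgt : (q : ℝ) < ∑ i ∈ Finset.Ico N k, (1 : ℝ) / (i + 1) := by
      rw [hsub]; linarith
    have hle : ∑ i ∈ Finset.Ico N k, (1 : ℝ) / (i + 1) ≤ ∑ i ∈ Finset.Ico N k, (1 : ℝ) / i := by
      apply Finset.sum_le_sum
      intro i hi
      have : N ≤ i := (Finset.mem_Ico.mp hi).1
      have hi0 : (0:ℝ) < i := by
        have : 0 < i := by omega
        exact_mod_cast this
      apply div_le_div_of_nonneg_left (by norm_num) hi0 (by linarith)
    have : (q : ℝ) < ∑ i ∈ Finset.Ico N k, (1 : ℝ) / i := lt_of_lt_of_le hgt hle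
    have hcast : ((∑ n ∈ Finset.Ico N k, (1 : ℚ) / n : ℚ) : ℝ) = ∑ i ∈ Finset.Ico N k, (1 : ℝ) / i := by
      push_cast; rfl
    exact_mod_cast hcast ▸ this
  classical
  set k₀ := Nat.find hexists with hk₀def
  have hk₀ := Nat.find_spec hexists
  have hNk : N < k₀ := by
    by_contra h
    push_neg at h
    have : Finset.Ico N k₀ = ∅ := Finset.Ico_eq_empty (by omega)
    rw [this] at hk₀
    simp at hk₀
    linarith
  set m := k₀ - 1 with hmdef
  have hNm : N ≤ m := by omega
  have hk₀m : k₀ = m + 1 := by omega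
  have hprev : ¬ q < ∑ n ∈ Finset.Ico N m, (1 : ℚ) / n := Nat.find_min hexists (by omega)
  push_neg at hprev
  set r : ℚ := q - ∑ n ∈ Finset.Ico N m, (1 : ℚ) / n with hrdef
  have hr0 : 0 ≤ r := sub_nonneg.mpr hprev
  have hsplit : ∑ n ∈ Finset.Ico N (m+1), (1 : ℚ) / n
      = ∑ n ∈ Finset.Ico N m, (1 : ℚ) / n + 1 / m := Finset.sum_Ico_succ_top hNm _
  have hrm : r < 1 / m := by
    have := hk₀
    rw [← hk₀def, hk₀m, hsplit] at this
    rw [hrdef]; linarith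
  have hm1 : 1 ≤ m := by omega
  have hmQ : (0:ℚ) < m := by exact_mod_cast hm1
  rcases eq_or_lt_of_le hr0 with h0 | h0
  · refine ⟨Finset.Ico N m, fun n hn => (Finset.mem_Ico.mp hn).1, ?_⟩
    have : q = ∑ n ∈ Finset.Ico N m, (1 : ℚ) / n := by rw [hrdef] at h0; linarith
    exact this
  · have hrmlt : r * m < 1 := by
      calc r * m < (1/m) * m := mul_lt_mul_of_pos_right hrm hmQ
        _ = 1 := by field_simp
    obtain ⟨S', hS'mem, hS'sum⟩ := greedy_s19 r.num.toNat r rfl h0 m hm1 hrmlt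
    have hdisj : Disjoint (Finset.Ico N m) S' := by
      rw [Finset.disjoint_left]
      intro n hn hn'
      have h1 := (Finset.mem_Ico.mp hn).2
      have h2 := hS'mem n hn'
      omega
    refine ⟨Finset.Ico N m ∪ S', ?_, ?_⟩
    · intro n hn
      rcases Finset.mem_union.mp hn with h | h
      · exact (Finset.mem_Ico.mp h).1
      · have := hS'mem n h; omega
    · rw [Finset.sum_union hdisj, ← hS'sum, hrdef]
      ring
end
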